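/- arXiv:1012.5458 — 2 statements merged into one kernel-verified Lean document; each statement's English description precedes it below -/
import Mathlib

section
/- For d ≥ 2 and s ≥ 0, the weight u(x) = |x'|^s on ℝ^d (where x = (x',x_d) ∈ ℝ^{d-1}×ℝ) belongs to the Muckenhoupt class A_p(ℝ^d) if and only if s < (p-1)(d-1). -/
open MeasureTheory Metric

/-- Points of ℝ^d written as `(x', x_d) ∈ ℝ^{d-1} × ℝ`. -/
abbrev Pt (d : ℕ) := EuclideanSpace ℝ (Fin (d - 1)) × ℝ

/-- The A_p ratio of a weight `u` over the ball of center `z` and radius `r`. -/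
noncomputable def apRatio {d : ℕ} (p : ℝ) (u : Pt d → ℝ) (z : Pt d) (r : ℝ) : ℝ :=
  (⨍ x in ball z r, u x) * (⨍ x in ball z r, (u x) ^ (-(1 / (p - 1)))) ^ (p - 1)

/-- Membership in the Muckenhoupt class `A_p(ℝ^d)`: a locally integrable weight whose
A_p ratios over all balls are uniformly bounded. -/
def MemAp {d : ℕ} (p : ℝ) (u : Pt d → ℝ) : Prop :=
  LocallyIntegrable u volume ∧ ∃ C : ℝ, ∀ z r, 0 < r → apRatio p u z r ≤ C

open Set
open scoped ENNReal

namespace ApAux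




noncomputable abbrev Em (m : ℕ) := EuclideanSpace ℝ (Fin m)
noncomputable def vE (m : ℕ) : ℝ := (volume (ball (0 : Em m) 1)).toReal
noncomputable def Kc (m : ℕ) (β : ℝ) : ℝ := (2:ℝ) ^ β * (1 - (2:ℝ) ^ (β - (m:ℝ)))⁻¹ * vE m

lemma vE_pos (m : ℕ) : 0 < vE m :=
  ENNReal.toReal_pos (measure_ball_pos _ _ one_pos).ne' measure_ball_lt_top.ne

lemma vol_ball_toReal (m : ℕ) (hm : 0 < m) (x : Em m) {r : ℝ} (hr : 0 ≤ r) :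
    (volume (ball x r)).toReal = r ^ m * vE m := by
  haveI : Nonempty (Fin m) := ⟨⟨0, hm⟩⟩
  rw [Measure.addHaar_ball _ _ hr, finrank_euclideanSpace_fin, ENNReal.toReal_mul,
    ENNReal.toReal_ofReal (by positivity), vE]

lemma exists_dyadic {t : ℝ} (h0 : 0 < t) (h1 : t < 1) :
    ∃ k : ℕ, (2⁻¹ : ℝ) ^ (k + 1) ≤ t ∧ t < 2⁻¹ ^ k := by
  have hP : ∃ k : ℕ, (2⁻¹ : ℝ) ^ (k + 1) ≤ t := by
    obtain ⟨n, hn⟩ := exists_pow_lt_of_lt_one h0 (by norm_num : (2⁻¹ : ℝ) < 1)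
    exact ⟨n, le_trans (pow_le_pow_of_le_one (by norm_num) (by norm_num) (Nat.le_succ n)) hn.le⟩
  classical
  refine ⟨Nat.find hP, Nat.find_spec hP, ?_⟩
  rcases h : Nat.find hP with _ | j
  · rw [pow_zero]; exact h1
  · have hmin := Nat.find_min hP (m := j) (by omega)
    push_neg at hmin
    exact hmin

lemma key (m : ℕ) (hm : 0 < m) {β R : ℝ} (hβ0 : 0 ≤ β) (hβm : β < (m:ℝ)) (hR : 0 < R) :
    IntegrableOn (fun y : Em m => ‖y‖ ^ (-β)) (ball 0 R) volume ∧
    ∫ y in ball (0 : Em m) R, ‖y‖ ^ (-β) ≤ Kc m β * R ^ ((m:ℝ) - β) := by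
  haveI : Nonempty (Fin m) := ⟨⟨0, hm⟩⟩
  have hm' : (0:ℝ) < m := by exact_mod_cast hm
  set q : ℝ := (2:ℝ) ^ (β - (m:ℝ)) with hq
  have hq0 : 0 < q := Real.rpow_pos_of_pos (by norm_num) _
  have hq1 : q < 1 := Real.rpow_lt_one_of_one_lt_of_neg (by norm_num) (by linarith)
  set D : ℝ := R ^ ((m:ℝ) - β) * 2 ^ β with hD
  have hD0 : 0 ≤ D := mul_nonneg (Real.rpow_nonneg hR.le _) (Real.rpow_nonneg (by norm_num) _)
  set A : ℕ → Set (Em m) := fun k => {y | R * 2⁻¹ ^ (k+1) ≤ ‖y‖} ∩ ball 0 (R * 2⁻¹ ^ k) with hA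
  have hAmeas : ∀ k, MeasurableSet (A k) := fun k =>
    (measurableSet_le measurable_const measurable_norm).inter measurableSet_ball
  have hcover : ball (0 : Em m) R \ {0} ⊆ ⋃ k, A k := by
    intro y hy
    have hyR : ‖y‖ < R := by simpa [mem_ball_zero_iff] using hy.1
    have hy0 : 0 < ‖y‖ := norm_pos_iff.2 (by simpa using hy.2)
    obtain ⟨k, hk1, hk2⟩ := exists_dyadic (t := ‖y‖ / R) (div_pos hy0 hR) ((div_lt_one hR).2 hyR)
    have h1 : R * 2⁻¹ ^ (k+1) ≤ ‖y‖ := by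
      have := (le_div_iff₀ hR).1 hk1
      linarith
    have h2 : ‖y‖ < R * 2⁻¹ ^ k := by
      have := (div_lt_iff₀ hR).1 hk2
      linarith
    exact mem_iUnion.2 ⟨k, ⟨h1, mem_ball_zero_iff.2 h2⟩⟩
  have hpow : ∀ k : ℕ, ((2:ℝ)⁻¹) ^ k = (2:ℝ) ^ (-(k:ℝ)) := fun k => by
    rw [inv_pow, ← Real.rpow_natCast 2 k, ← Real.rpow_neg (by norm_num)]
  have hterm : ∀ k : ℕ, (R * 2⁻¹ ^ (k+1)) ^ (-β) * ((R * 2⁻¹ ^ k) ^ (m:ℕ)) = D * q ^ k := by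
    intro k
    have e1 : (R * 2⁻¹ ^ (k+1)) ^ (-β) = R ^ (-β) * 2 ^ (-((k:ℝ)+1) * -β) := by
      rw [Real.mul_rpow hR.le (by positivity), hpow (k+1),
        ← Real.rpow_mul (by norm_num : (0:ℝ) ≤ 2)]
      push_cast
      ring_nf
    have e2 : ((R * 2⁻¹ ^ k) ^ (m:ℕ) : ℝ) = R ^ ((m:ℝ)) * 2 ^ (-(k:ℝ) * (m:ℝ)) := by
      rw [mul_pow, hpow k, ← Real.rpow_natCast (2 ^ (-(k:ℝ))) m,
        ← Real.rpow_mul (by norm_num : (0:ℝ) ≤ 2), ← Real.rpow_natCast R m]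
    have e3 : (q : ℝ) ^ k = 2 ^ ((β - (m:ℝ)) * (k:ℝ)) := by
      rw [hq, ← Real.rpow_natCast ((2:ℝ) ^ (β - (m:ℝ))) k,
        ← Real.rpow_mul (by norm_num : (0:ℝ) ≤ 2)]
    rw [e1, e2, e3, hD]
    rw [show R ^ (-β) * (2:ℝ) ^ (-((k:ℝ)+1) * -β) * (R ^ ((m:ℝ)) * 2 ^ (-(k:ℝ) * (m:ℝ)))
        = (R ^ (-β) * R ^ ((m:ℝ))) * ((2:ℝ) ^ (-((k:ℝ)+1) * -β) * 2 ^ (-(k:ℝ) * (m:ℝ))) by ring]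
    rw [← Real.rpow_add hR, ← Real.rpow_add (by norm_num : (0:ℝ) < 2)]
    rw [show -((k:ℝ) + 1) * -β + -(k:ℝ) * (m:ℝ) = β + (β - (m:ℝ)) * (k:ℝ) by ring,
      show -β + (m:ℝ) = (m:ℝ) - β by ring, mul_assoc,
      ← Real.rpow_add (by norm_num : (0:ℝ) < 2)]
  set vB := volume (ball (0 : Em m) 1) with hvB
  have hvBfin : vB ≠ ⊤ := measure_ball_lt_top.ne
  have hf0 : ∀ y : Em m, 0 ≤ ‖y‖ ^ (-β) := fun y => Real.rpow_nonneg (norm_nonneg y) _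
  have hfm : Measurable (fun y : Em m => ‖y‖ ^ (-β)) := by fun_prop
  have hshell : ∀ k, (∫⁻ y in A k, ENNReal.ofReal (‖y‖ ^ (-β)))
      ≤ ENNReal.ofReal (D * q ^ k) * vB := by
    intro k
    have h1 : (∫⁻ y in A k, ENNReal.ofReal (‖y‖ ^ (-β)))
        ≤ ∫⁻ _y in A k, ENNReal.ofReal ((R * 2⁻¹ ^ (k+1)) ^ (-β)) := by
      refine setLIntegral_mono' (hAmeas k) (fun y hy => ?_)
      refine ENNReal.ofReal_le_ofReal ?_
      exact Real.rpow_le_rpow_of_nonpos (by positivity) hy.1 (neg_nonpos.2 hβ0)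
    refine h1.trans ?_
    rw [setLIntegral_const]
    have h2 : volume (A k) ≤ ENNReal.ofReal ((R * 2⁻¹ ^ k) ^ (m:ℕ)) * vB := by
      calc volume (A k) ≤ volume (ball (0 : Em m) (R * 2⁻¹ ^ k)) :=
            measure_mono inter_subset_right
        _ = ENNReal.ofReal ((R * 2⁻¹ ^ k) ^ (m:ℕ)) * vB := by
            rw [Measure.addHaar_ball _ _ (by positivity : (0:ℝ) ≤ R * 2⁻¹ ^ k),
              finrank_euclideanSpace_fin]
    calc ENNReal.ofReal ((R * 2⁻¹ ^ (k+1)) ^ (-β)) * volume (A k)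
        ≤ ENNReal.ofReal ((R * 2⁻¹ ^ (k+1)) ^ (-β)) * (ENNReal.ofReal ((R * 2⁻¹ ^ k) ^ (m:ℕ)) * vB) :=
          mul_le_mul_right h2 _
      _ = ENNReal.ofReal ((R * 2⁻¹ ^ (k+1)) ^ (-β) * ((R * 2⁻¹ ^ k) ^ (m:ℕ))) * vB := by
          rw [← mul_assoc, ← ENNReal.ofReal_mul (Real.rpow_nonneg (by positivity) _)]
      _ = ENNReal.ofReal (D * q ^ k) * vB := by rw [hterm k]
  have hL : (∫⁻ y in ball (0 : Em m) R, ENNReal.ofReal (‖y‖ ^ (-β)))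
      ≤ ∑' k, ENNReal.ofReal (D * q ^ k) * vB := by
    have h0 : (∫⁻ y in ball (0 : Em m) R, ENNReal.ofReal (‖y‖ ^ (-β)))
        = ∫⁻ y in ball (0 : Em m) R \ {0}, ENNReal.ofReal (‖y‖ ^ (-β)) := by
      refine (setLIntegral_congr ?_).symm
      exact diff_ae_eq_self.2 (measure_mono_null inter_subset_right (measure_singleton 0))
    rw [h0]
    calc (∫⁻ y in ball (0 : Em m) R \ {0}, ENNReal.ofReal (‖y‖ ^ (-β)))
        ≤ ∫⁻ y in ⋃ k, A k, ENNReal.ofReal (‖y‖ ^ (-β)) := lintegral_mono_set hcover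
      _ ≤ ∑' k, ∫⁻ y in A k, ENNReal.ofReal (‖y‖ ^ (-β)) := lintegral_iUnion_le _ _
      _ ≤ ∑' k, ENNReal.ofReal (D * q ^ k) * vB := ENNReal.tsum_le_tsum hshell
  have htsum : (∑' k : ℕ, ENNReal.ofReal (D * q ^ k) * vB)
      = ENNReal.ofReal D * (1 - ENNReal.ofReal q)⁻¹ * vB := by
    rw [ENNReal.tsum_mul_right]
    congr 1
    calc (∑' k : ℕ, ENNReal.ofReal (D * q ^ k))
        = ∑' k : ℕ, ENNReal.ofReal D * (ENNReal.ofReal q) ^ k := by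
          refine tsum_congr fun k => ?_
          rw [ENNReal.ofReal_mul hD0, ENNReal.ofReal_pow hq0.le]
      _ = ENNReal.ofReal D * (1 - ENNReal.ofReal q)⁻¹ := by
          rw [ENNReal.tsum_mul_left, ENNReal.tsum_geometric]
  rw [htsum] at hL
  have hone : (1 : ℝ≥0∞) - ENNReal.ofReal q = ENNReal.ofReal (1 - q) := by
    rw [ENNReal.ofReal_sub _ hq0.le, ENNReal.ofReal_one]
  have h1q : (0:ℝ) < 1 - q := by linarith
  have hfin : ENNReal.ofReal D * (1 - ENNReal.ofReal q)⁻¹ * vB ≠ ⊤ := by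
    rw [hone]
    refine ENNReal.mul_ne_top (ENNReal.mul_ne_top ENNReal.ofReal_ne_top
      (ENNReal.inv_ne_top.2 ?_)) hvBfin
    simp only [ne_eq, ENNReal.ofReal_eq_zero, not_le]
    linarith
  have hInt : IntegrableOn (fun y : Em m => ‖y‖ ^ (-β)) (ball 0 R) volume := by
    refine ⟨hfm.aestronglyMeasurable, ?_⟩
    rw [hasFiniteIntegral_iff_ofReal (Filter.Eventually.of_forall hf0)]
    exact lt_of_le_of_lt hL hfin.lt_top
  refine ⟨hInt, ?_⟩
  rw [integral_eq_lintegral_of_nonneg_ae (Filter.Eventually.of_forall hf0)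
    hfm.aestronglyMeasurable]
  have hK0 : 0 ≤ Kc m β * R ^ ((m:ℝ) - β) := by
    refine mul_nonneg (mul_nonneg (mul_nonneg (Real.rpow_nonneg (by norm_num) _) ?_)
      ENNReal.toReal_nonneg) (Real.rpow_nonneg hR.le _)
    rw [← hq]
    exact inv_nonneg.2 (by linarith)
  refine ENNReal.toReal_le_of_le_ofReal hK0 ?_
  refine hL.trans (le_of_eq ?_)
  rw [hone, ← ENNReal.ofReal_inv_of_pos h1q, ← ENNReal.ofReal_toReal hvBfin,
    ← ENNReal.ofReal_mul hD0, ← ENNReal.ofReal_mul (by positivity)]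
  congr 1
  rw [hD, Kc, vE, ← hvB, ← hq]
  ring


variable {α : Type*} [MeasurableSpace α] {μ : Measure α} {s : Set α} {f : α → ℝ}

lemma avg_nonneg (hs : MeasurableSet s) (h : ∀ x ∈ s, 0 ≤ f x) :
    0 ≤ ⨍ x in s, f x ∂μ := by
  rw [setAverage_eq, smul_eq_mul]
  exact mul_nonneg (inv_nonneg.2 ENNReal.toReal_nonneg) (setIntegral_nonneg hs h)

lemma avg_le {M : ℝ} (hs : MeasurableSet s) (hfin : μ s ≠ ⊤) (hM : 0 ≤ M)
    (hf : ∀ x ∈ s, f x ≤ M) : ⨍ x in s, f x ∂μ ≤ M := by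
  rw [setAverage_eq, smul_eq_mul]
  by_cases hi : IntegrableOn f s μ
  · have h1 : ∫ x in s, f x ∂μ ≤ M * (μ s).toReal := by
      calc ∫ x in s, f x ∂μ ≤ ∫ _x in s, M ∂μ :=
            setIntegral_mono_on hi (integrableOn_const hfin) hs hf
        _ = (μ s).toReal • M := setIntegral_const M
        _ = M * (μ s).toReal := by rw [smul_eq_mul, mul_comm]
    calc (μ s).toReal⁻¹ * ∫ x in s, f x ∂μ ≤ (μ s).toReal⁻¹ * (M * (μ s).toReal) :=
          mul_le_mul_of_nonneg_left h1 (inv_nonneg.2 ENNReal.toReal_nonneg)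
      _ = ((μ s).toReal⁻¹ * (μ s).toReal) * M := by ring
      _ ≤ 1 * M := by
          refine mul_le_mul_of_nonneg_right ?_ hM
          rcases eq_or_ne ((μ s).toReal) 0 with h | h
          · simp [h]
          · rw [inv_mul_cancel₀ h]
      _ = M := one_mul M
  · rw [integral_undef hi, mul_zero]; exact hM

lemma le_avg {A : ℝ} (hA : A ≤ ∫ x in s, f x ∂μ) :
    A / (μ s).toReal ≤ ⨍ x in s, f x ∂μ := by
  rw [setAverage_eq, smul_eq_mul, div_eq_inv_mul]
  exact mul_le_mul_of_nonneg_left hA (inv_nonneg.2 ENNReal.toReal_nonneg)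

lemma Kc_nonneg (m : ℕ) {β : ℝ} (hβm : β < (m:ℝ)) : 0 ≤ Kc m β := by
  have h1 : (2:ℝ) ^ (β - (m:ℝ)) < 1 :=
    Real.rpow_lt_one_of_one_lt_of_neg (by norm_num) (by linarith)
  exact mul_nonneg (mul_nonneg (Real.rpow_nonneg (by norm_num) _)
    (inv_nonneg.2 (by linarith))) ENNReal.toReal_nonneg

lemma forward (m : ℕ) (hm : 0 < m) {p s : ℝ} (hp : 1 < p) (hs : 0 ≤ s)
    (hlt : s < (p-1)*m) :
    ∃ C : ℝ, ∀ (w : Em m) (r : ℝ), 0 < r →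
      (⨍ y in ball w r, ‖y‖ ^ s) * (⨍ y in ball w r, ‖y‖ ^ (-(s/(p-1)))) ^ (p-1) ≤ C := by
  have hp1 : 0 < p - 1 := by linarith
  set β := s / (p-1) with hβ
  have hβ0 : 0 ≤ β := div_nonneg hs hp1.le
  have hβm : β < (m:ℝ) := (div_lt_iff₀ hp1).2 (by linarith)
  have hβs : β * (p-1) = s := div_mul_cancel₀ s hp1.ne'
  have hv : 0 < vE m := vE_pos m
  have hK0 : 0 ≤ Kc m β := Kc_nonneg m hβm
  have hQ0 : 0 ≤ Kc m β * 3 ^ ((m:ℝ) - β) / vE m := by positivity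
  refine ⟨(3:ℝ)^s ⊔ (3:ℝ)^s * ((Kc m β * 3 ^ ((m:ℝ) - β) / vE m) ^ (p-1)), fun w r hr => ?_⟩
  have havg_u0 : 0 ≤ ⨍ y in ball w r, ‖y‖ ^ s :=
    avg_nonneg measurableSet_ball fun x _ => Real.rpow_nonneg (norm_nonneg x) _
  have havg_σ0 : 0 ≤ ⨍ y in ball w r, ‖y‖ ^ (-β) :=
    avg_nonneg measurableSet_ball fun x _ => Real.rpow_nonneg (norm_nonneg x) _
  rcases le_or_gt (2*r) ‖w‖ with hfar | hnear
  · -- far case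
    have hw0 : 0 < ‖w‖ := lt_of_lt_of_le (by linarith) hfar
    have hu : ⨍ y in ball w r, ‖y‖ ^ s ≤ ((3/2) * ‖w‖) ^ s := by
      refine avg_le measurableSet_ball measure_ball_lt_top.ne
        (Real.rpow_nonneg (by positivity) _) (fun x hx => ?_)
      refine Real.rpow_le_rpow (norm_nonneg x) ?_ hs
      have h1 : ‖x - w‖ < r := mem_ball_iff_norm.1 hx
      have h2 : ‖x‖ ≤ ‖w‖ + ‖x - w‖ := by
        calc ‖x‖ = ‖w + (x - w)‖ := by rw [add_sub_cancel]
          _ ≤ ‖w‖ + ‖x - w‖ := norm_add_le _ _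
      linarith
    have hσ : ⨍ y in ball w r, ‖y‖ ^ (-β) ≤ (‖w‖/2) ^ (-β) := by
      refine avg_le measurableSet_ball measure_ball_lt_top.ne
        (Real.rpow_nonneg (by positivity) _) (fun x hx => ?_)
      refine Real.rpow_le_rpow_of_nonpos (by positivity) ?_ (neg_nonpos.2 hβ0)
      have h1 : ‖x - w‖ < r := mem_ball_iff_norm.1 hx
      have h2 : ‖w‖ - ‖x - w‖ ≤ ‖x‖ := by
        have := norm_sub_norm_le w x
        have h3 : ‖w - x‖ = ‖x - w‖ := norm_sub_rev w x
        linarith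
      linarith
    have halg : ((3/2) * ‖w‖) ^ s * ((‖w‖/2) ^ (-β)) ^ (p-1) = 3 ^ s := by
      rw [← Real.rpow_mul (by positivity) (-β) (p-1), neg_mul, hβs,
        Real.mul_rpow (by norm_num) hw0.le, Real.div_rpow hw0.le (by norm_num),
        Real.rpow_neg (by positivity)]
      have hws : (0:ℝ) < ‖w‖ ^ s := Real.rpow_pos_of_pos hw0 s
      rw [Real.rpow_neg (by norm_num : (0:ℝ) ≤ 2),
        show ((3:ℝ)/2)^s * ‖w‖^s * ((‖w‖^s)⁻¹ / (2^s)⁻¹)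
          = (((3:ℝ)/2)^s * 2^s) * (‖w‖^s * (‖w‖^s)⁻¹) by field_simp <;> ring,
        mul_inv_cancel₀ hws.ne', mul_one,
        ← Real.mul_rpow (by norm_num : (0:ℝ) ≤ 3/2) (by norm_num : (0:ℝ) ≤ 2)]
      norm_num
    calc (⨍ y in ball w r, ‖y‖ ^ s) * (⨍ y in ball w r, ‖y‖ ^ (-β)) ^ (p-1)
        ≤ ((3/2) * ‖w‖) ^ s * ((‖w‖/2) ^ (-β)) ^ (p-1) := by
          refine mul_le_mul hu (Real.rpow_le_rpow havg_σ0 hσ hp1.le)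
            (Real.rpow_nonneg havg_σ0 _) (Real.rpow_nonneg (by positivity) _)
      _ = 3 ^ s := halg
      _ ≤ _ := le_max_left _ _
  · -- near case
    have hsub : ball w r ⊆ ball (0 : Em m) (3*r) := fun x hx => by
      rw [mem_ball_zero_iff]
      have h1 : ‖x - w‖ < r := mem_ball_iff_norm.1 hx
      have h2 : ‖x‖ ≤ ‖x - w‖ + ‖w‖ := by
        calc ‖x‖ = ‖(x - w) + w‖ := by rw [sub_add_cancel]
          _ ≤ ‖x - w‖ + ‖w‖ := norm_add_le _ _
      linarith
    obtain ⟨hint, hbound⟩ := key m hm hβ0 hβm (by linarith : (0:ℝ) < 3*r)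
    have hu : ⨍ y in ball w r, ‖y‖ ^ s ≤ (3*r) ^ s := by
      refine avg_le measurableSet_ball measure_ball_lt_top.ne
        (Real.rpow_nonneg (by positivity) _) (fun x hx => ?_)
      exact Real.rpow_le_rpow (norm_nonneg x) (le_of_lt (mem_ball_zero_iff.1 (hsub hx))) hs
    have hσ : ⨍ y in ball w r, ‖y‖ ^ (-β)
        ≤ (Kc m β * 3 ^ ((m:ℝ) - β) / vE m) * r ^ (-β) := by
      rw [setAverage_eq, smul_eq_mul]
      have hmono : ∫ y in ball w r, ‖y‖ ^ (-β) ≤ ∫ y in ball (0 : Em m) (3*r), ‖y‖ ^ (-β) :=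
        setIntegral_mono_set hint
          (Filter.Eventually.of_forall fun y => Real.rpow_nonneg (norm_nonneg y) _)
          (HasSubset.Subset.eventuallyLE hsub)
      have hv2 : (volume (ball w r)).toReal = r ^ m * vE m := vol_ball_toReal m hm w hr.le
      calc (volume (ball w r)).toReal⁻¹ * ∫ y in ball w r, ‖y‖ ^ (-β)
          ≤ (volume (ball w r)).toReal⁻¹ * (Kc m β * (3*r) ^ ((m:ℝ) - β)) :=
            mul_le_mul_of_nonneg_left (hmono.trans hbound)
              (inv_nonneg.2 ENNReal.toReal_nonneg)
        _ = (Kc m β * 3 ^ ((m:ℝ) - β) / vE m) * r ^ (-β) := by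
            rw [hv2, Real.mul_rpow (by norm_num : (0:ℝ) ≤ 3) hr.le,
              ← Real.rpow_natCast r m, mul_inv]
            rw [← Real.rpow_neg hr.le]
            rw [show (r ^ (-(m:ℝ)) * (vE m)⁻¹) * (Kc m β * (3 ^ ((m:ℝ) - β) * r ^ ((m:ℝ) - β)))
                = (Kc m β * 3 ^ ((m:ℝ) - β) * (vE m)⁻¹) * (r ^ (-(m:ℝ)) * r ^ ((m:ℝ) - β)) by ring,
              ← Real.rpow_add hr, show -(m:ℝ) + ((m:ℝ) - β) = -β by ring, div_eq_mul_inv]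
    calc (⨍ y in ball w r, ‖y‖ ^ s) * (⨍ y in ball w r, ‖y‖ ^ (-β)) ^ (p-1)
        ≤ (3*r) ^ s * ((Kc m β * 3 ^ ((m:ℝ) - β) / vE m) * r ^ (-β)) ^ (p-1) := by
          refine mul_le_mul hu (Real.rpow_le_rpow havg_σ0 hσ hp1.le)
            (Real.rpow_nonneg havg_σ0 _) (Real.rpow_nonneg (by positivity) _)
      _ = (3:ℝ)^s * ((Kc m β * 3 ^ ((m:ℝ) - β) / vE m) ^ (p-1)) := by
          rw [Real.mul_rpow hQ0 (Real.rpow_nonneg hr.le _),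
            ← Real.rpow_mul hr.le (-β) (p-1), neg_mul, hβs,
            Real.mul_rpow (by norm_num : (0:ℝ) ≤ 3) hr.le,
            Real.rpow_neg hr.le]
          have hrs : (0:ℝ) < r ^ s := Real.rpow_pos_of_pos hr s
          rw [show (3:ℝ)^s * r^s * ((Kc m β * 3 ^ ((m:ℝ) - β) / vE m) ^ (p-1) * (r^s)⁻¹)
              = ((3:ℝ)^s * ((Kc m β * 3 ^ ((m:ℝ) - β) / vE m) ^ (p-1))) * (r^s * (r^s)⁻¹) by ring,
            mul_inv_cancel₀ hrs.ne', mul_one]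
      _ ≤ _ := le_max_right _ _

lemma reverse (m : ℕ) (hm : 0 < m) {p s : ℝ} (hp : 1 < p) (hs : 0 ≤ s)
    (hge : (p-1)*m ≤ s) (C : ℝ) :
    ∃ (w : Em m) (r : ℝ), 0 < r ∧
      C < (⨍ y in ball w r, ‖y‖ ^ s) * (⨍ y in ball w r, ‖y‖ ^ (-(s/(p-1)))) ^ (p-1) := by
  classical
  have hp1 : 0 < p - 1 := by linarith
  set β := s / (p-1) with hβ
  have hβ0 : 0 ≤ β := div_nonneg hs hp1.le
  have hβm : (m:ℝ) ≤ β := (le_div_iff₀ hp1).2 (by linarith)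
  have hv : 0 < vE m := vE_pos m
  -- constants
  set c₁ : ℝ := (2⁻¹:ℝ) ^ s * (2⁻¹:ℝ) ^ (m:ℕ) with hc₁def
  have hc₁ : 0 < c₁ := mul_pos (Real.rpow_pos_of_pos (by norm_num) _) (by positivity)
  set c₂ : ℝ := (2:ℝ) ^ (-β - (m:ℝ)) * vE m with hc₂def
  have hc₂ : 0 < c₂ := mul_pos (Real.rpow_pos_of_pos (by norm_num) _) hv
  set a : ℝ := c₂ / vE m with hadef
  have ha : 0 < a := div_pos hc₂ hv
  set X : ℝ := (C / c₁) ⊔ 1 with hXdef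
  have hX1 : 1 ≤ X := le_max_right _ _
  have hX0 : 0 < X := lt_of_lt_of_le one_pos hX1
  set T : ℝ := X ^ (p-1)⁻¹ with hTdef
  have hT : 0 < T := Real.rpow_pos_of_pos hX0 _
  set N : ℕ := ⌈T / a⌉₊ + 1 with hNdef
  have hN0 : 0 < N := Nat.succ_pos _
  have hNa : T < N * a := by
    have h1 : T / a ≤ (⌈T / a⌉₊ : ℝ) := Nat.le_ceil _
    have h2 : (T / a : ℝ) < N := by
      rw [hNdef]
      push_cast
      linarith
    calc T = (T / a) * a := by field_simp
      _ < N * a := by exact mul_lt_mul_of_pos_right h2 ha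
  -- geometry
  set e : Em m := EuclideanSpace.single (⟨0, hm⟩ : Fin m) (1:ℝ) with hedef
  have he : ‖e‖ = 1 := by rw [hedef, EuclideanSpace.norm_single, norm_one]
  set ε : ℝ := (4⁻¹:ℝ) ^ (N+2) with hεdef
  have hε : 0 < ε := by positivity
  set w : Em m := (1+ε) • e with hwdef
  have hw : ‖w‖ = 1 + ε := by
    rw [hwdef, norm_smul, he, mul_one, Real.norm_eq_abs, abs_of_pos (by linarith)]
  set δ : ℕ → ℝ := fun k => (4⁻¹:ℝ) ^ (k+1) with hδdef
  have hδpos : ∀ k, 0 < δ k := fun k => by positivity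
  have hδ1 : ∀ k, δ k ≤ 4⁻¹ := fun k => by
    rw [hδdef]
    calc (4⁻¹:ℝ) ^ (k+1) ≤ 4⁻¹ ^ 1 :=
      pow_le_pow_of_le_one (by norm_num) (by norm_num) (by omega)
    _ = 4⁻¹ := pow_one _
  have hεδ : ∀ k < N, ε ≤ δ k / 4 := fun k hk => by
    have h1 : (δ k / 4 : ℝ) = 4⁻¹ ^ (k+2) := by rw [hδdef]; ring
    rw [h1, hεdef]
    exact pow_le_pow_of_le_one (by norm_num) (by norm_num) (by omega)
  set S : ℕ → Set (Em m) := fun k => ball ((ε + δ k) • e) (δ k / 2) with hSdef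
  have hnorm_ce : ∀ k, ‖((ε + δ k) • e : Em m)‖ = ε + δ k := fun k => by
    rw [norm_smul, he, mul_one, Real.norm_eq_abs, abs_of_pos (by linarith [hδpos k])]
  have hS_norm_lb : ∀ k, ∀ x ∈ S k, ε + δ k / 2 ≤ ‖x‖ := by
    intro k x hx
    have h1 : ‖x - (ε + δ k) • e‖ < δ k / 2 := mem_ball_iff_norm.1 hx
    have h2 : ‖((ε + δ k) • e : Em m)‖ ≤ ‖x‖ + ‖x - (ε + δ k) • e‖ := by
      calc ‖((ε + δ k) • e : Em m)‖ = ‖x - (x - (ε + δ k) • e)‖ := by rw [sub_sub_cancel]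
        _ ≤ ‖x‖ + ‖x - (ε + δ k) • e‖ := norm_sub_le _ _
    rw [hnorm_ce k] at h2
    linarith
  have hS_norm_ub : ∀ k, ∀ x ∈ S k, ‖x‖ ≤ ε + 3 * δ k / 2 := by
    intro k x hx
    have h1 : ‖x - (ε + δ k) • e‖ < δ k / 2 := mem_ball_iff_norm.1 hx
    have h2 : ‖x‖ ≤ ‖((ε + δ k) • e : Em m)‖ + ‖x - (ε + δ k) • e‖ := by
      calc ‖x‖ = ‖(ε + δ k) • e + (x - (ε + δ k) • e)‖ := by rw [add_sub_cancel]
        _ ≤ _ := norm_add_le _ _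
    rw [hnorm_ce k] at h2
    linarith
  have hS_sub : ∀ k, S k ⊆ ball w 1 := by
    intro k x hx
    rw [mem_ball_iff_norm]
    have h1 : ‖x - (ε + δ k) • e‖ < δ k / 2 := mem_ball_iff_norm.1 hx
    have h2 : ((ε + δ k) • e : Em m) - w = (δ k - 1) • e := by
      rw [hwdef, ← sub_smul]
      congr 1
      ring
    have h3 : ‖((ε + δ k) • e : Em m) - w‖ = 1 - δ k := by
      rw [h2, norm_smul, he, mul_one, Real.norm_eq_abs,
        abs_of_neg (by linarith [hδ1 k] : δ k - 1 < 0)]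
      ring
    calc ‖x - w‖ = ‖(x - (ε + δ k) • e) + ((ε + δ k) • e - w)‖ := by rw [sub_add_sub_cancel]
      _ ≤ ‖x - (ε + δ k) • e‖ + ‖((ε + δ k) • e : Em m) - w‖ := norm_add_le _ _
      _ < δ k / 2 + (1 - δ k) := by rw [h3]; linarith
      _ ≤ 1 := by linarith [hδpos k]
  have hball_lb : ∀ x ∈ ball w 1, ε ≤ ‖x‖ := by
    intro x hx
    have h1 : ‖x - w‖ < 1 := mem_ball_iff_norm.1 hx
    have h2 : ‖w‖ ≤ ‖x‖ + ‖x - w‖ := by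
      calc ‖w‖ = ‖x - (x - w)‖ := by rw [sub_sub_cancel]
        _ ≤ ‖x‖ + ‖x - w‖ := norm_sub_le _ _
    rw [hw] at h2
    linarith
  have hball_ub : ∀ x ∈ ball w 1, ‖x‖ ≤ 2 + ε := by
    intro x hx
    have h1 : ‖x - w‖ < 1 := mem_ball_iff_norm.1 hx
    have h2 : ‖x‖ ≤ ‖w‖ + ‖x - w‖ := by
      calc ‖x‖ = ‖w + (x - w)‖ := by rw [add_sub_cancel]
        _ ≤ ‖w‖ + ‖x - w‖ := norm_add_le _ _
    rw [hw] at h2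
    linarith
  have hmσ : Measurable (fun y : Em m => ‖y‖ ^ (-β)) := by fun_prop
  have hmu : Measurable (fun y : Em m => ‖y‖ ^ s) := by fun_prop
  have hσint : IntegrableOn (fun y : Em m => ‖y‖ ^ (-β)) (ball w 1) volume := by
    refine Measure.integrableOn_of_bounded (M := ε ^ (-β)) measure_ball_lt_top.ne
      hmσ.aestronglyMeasurable ?_
    refine (ae_restrict_iff' measurableSet_ball).2 (Filter.Eventually.of_forall fun x hx => ?_)
    rw [Real.norm_eq_abs, abs_of_nonneg (Real.rpow_nonneg (norm_nonneg x) _)]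
    exact Real.rpow_le_rpow_of_nonpos hε (hball_lb x hx) (neg_nonpos.2 hβ0)
  have huint : IntegrableOn (fun y : Em m => ‖y‖ ^ s) (ball w 1) volume := by
    refine Measure.integrableOn_of_bounded (M := (2 + ε) ^ s) measure_ball_lt_top.ne
      hmu.aestronglyMeasurable ?_
    refine (ae_restrict_iff' measurableSet_ball).2 (Filter.Eventually.of_forall fun x hx => ?_)
    rw [Real.norm_eq_abs, abs_of_nonneg (Real.rpow_nonneg (norm_nonneg x) _)]
    exact Real.rpow_le_rpow (norm_nonneg x) (hball_ub x hx) hs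
  have hSk_lb : ∀ k < N, c₂ ≤ ∫ y in S k, ‖y‖ ^ (-β) := by
    intro k hk
    have hub2 : ∀ x ∈ S k, ‖x‖ ≤ 2 * δ k := by
      intro x hx
      have := hS_norm_ub k x hx
      have := hεδ k hk
      linarith
    have h1 : (2 * δ k) ^ (-β) * (volume (S k)).toReal ≤ ∫ y in S k, ‖y‖ ^ (-β) := by
      refine setIntegral_ge_of_const_le_real measurableSet_ball measure_ball_lt_top.ne
        (fun x hx => ?_) (hσint.mono_set (hS_sub k))
      refine Real.rpow_le_rpow_of_nonpos ?_ (hub2 x hx) (neg_nonpos.2 hβ0)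
      have := hS_norm_lb k x hx
      linarith [hδpos k]
    refine le_trans ?_ h1
    rw [hSdef, vol_ball_toReal m hm _ (by positivity : (0:ℝ) ≤ δ k / 2)]
    have e1 : ((δ k / 2) ^ (m:ℕ) : ℝ) = (δ k) ^ ((m:ℝ)) * 2 ^ (-(m:ℝ)) := by
      rw [show (δ k / 2 : ℝ) = δ k * 2⁻¹ by ring, mul_pow, ← Real.rpow_natCast (δ k) m,
        inv_pow, ← Real.rpow_natCast 2 m, ← Real.rpow_neg (by norm_num : (0:ℝ) ≤ 2)]
    have e2 : ((2:ℝ) * δ k) ^ (-β) = 2 ^ (-β) * (δ k) ^ (-β) :=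
      Real.mul_rpow (by norm_num) (hδpos k).le
    rw [e1, e2, hc₂def]
    have e4 : (2:ℝ) ^ (-β) * (δ k) ^ (-β) * ((δ k) ^ ((m:ℝ)) * 2 ^ (-(m:ℝ)) * vE m)
        = ((2:ℝ) ^ (-β) * 2 ^ (-(m:ℝ)) * vE m) * ((δ k) ^ (-β) * (δ k) ^ ((m:ℝ))) := by ring
    rw [e4, ← Real.rpow_add (by norm_num : (0:ℝ) < 2), ← Real.rpow_add (hδpos k)]
    have e5 : (1:ℝ) ≤ (δ k) ^ (-β + (m:ℝ)) := by
      refine Real.one_le_rpow_of_pos_of_le_one_of_nonpos (hδpos k) ?_ (by linarith)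
      linarith [hδ1 k]
    have e6 : (0:ℝ) < 2 ^ (-β + -(m:ℝ)) * vE m :=
      mul_pos (Real.rpow_pos_of_pos (by norm_num) _) hv
    calc (2:ℝ) ^ (-β - (m:ℝ)) * vE m = 2 ^ (-β + -(m:ℝ)) * vE m * 1 := by
          rw [mul_one, show -β - (m:ℝ) = -β + -(m:ℝ) by ring]
      _ ≤ 2 ^ (-β + -(m:ℝ)) * vE m * ((δ k) ^ (-β + (m:ℝ))) :=
          mul_le_mul_of_nonneg_left e5 e6.le
  have haux_disj : ∀ j k, j < k → Disjoint (S j) (S k) := by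
    intro j k hjk
    rw [Set.disjoint_left]
    intro x hxj hxk
    have h1 : ε + δ j / 2 ≤ ‖x‖ := hS_norm_lb j x hxj
    have h2 : ‖x‖ ≤ ε + 3 * δ k / 2 := hS_norm_ub k x hxk
    have h3 : δ k ≤ δ j / 4 := by
      have : (δ j / 4 : ℝ) = 4⁻¹ ^ (j+2) := by rw [hδdef]; ring
      rw [this, hδdef]
      exact pow_le_pow_of_le_one (by norm_num) (by norm_num) (by omega)
    linarith [hδpos j]
  have hdisj : (↑(Finset.range N) : Set ℕ).Pairwise (Function.onFun Disjoint S) := by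
    intro j _ k _ hjk
    rcases lt_or_gt_of_ne hjk with h | h
    · exact haux_disj j k h
    · exact (haux_disj k j h).symm
  have hsum : (N : ℝ) * c₂ ≤ ∫ y in ball w 1, ‖y‖ ^ (-β) := by
    have hU : ∫ y in (⋃ k ∈ Finset.range N, S k), ‖y‖ ^ (-β)
        = ∑ k ∈ Finset.range N, ∫ y in S k, ‖y‖ ^ (-β) :=
      integral_biUnion_finset (Finset.range N) (fun i _ => measurableSet_ball) hdisj
        (fun i _ => hσint.mono_set (hS_sub i))
    have hUsub : (⋃ k ∈ Finset.range N, S k) ⊆ ball w 1 :=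
      iUnion₂_subset fun k _ => hS_sub k
    calc (N:ℝ) * c₂ = ∑ _k ∈ Finset.range N, c₂ := by
          rw [Finset.sum_const, Finset.card_range, nsmul_eq_mul]
      _ ≤ ∑ k ∈ Finset.range N, ∫ y in S k, ‖y‖ ^ (-β) :=
          Finset.sum_le_sum (fun k hk => hSk_lb k (Finset.mem_range.1 hk))
      _ = ∫ y in (⋃ k ∈ Finset.range N, S k), ‖y‖ ^ (-β) := hU.symm
      _ ≤ ∫ y in ball w 1, ‖y‖ ^ (-β) := setIntegral_mono_set hσint
          (Filter.Eventually.of_forall fun y => Real.rpow_nonneg (norm_nonneg y) _)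
          (HasSubset.Subset.eventuallyLE hUsub)
  have hσavg : (N:ℝ) * a ≤ ⨍ y in ball w 1, ‖y‖ ^ (-β) := by
    have h := le_avg (μ := volume) (s := ball w 1) hsum
    rw [vol_ball_toReal m hm w zero_le_one, one_pow, one_mul] at h
    calc (N:ℝ) * a = (N:ℝ) * c₂ / vE m := by rw [hadef]; ring
      _ ≤ _ := h
  have huavg : c₁ ≤ ⨍ y in ball w 1, ‖y‖ ^ s := by
    have hsubhalf : ball w (2⁻¹:ℝ) ⊆ ball w 1 := ball_subset_ball (by norm_num)
    have h1 : (2⁻¹:ℝ)^s * (volume (ball w (2⁻¹:ℝ))).toReal ≤ ∫ y in ball w (2⁻¹:ℝ), ‖y‖^s := by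
      refine setIntegral_ge_of_const_le_real measurableSet_ball measure_ball_lt_top.ne
        (fun x hx => ?_) (huint.mono_set hsubhalf)
      refine Real.rpow_le_rpow (by norm_num) ?_ hs
      have hx1 : ‖x - w‖ < 2⁻¹ := mem_ball_iff_norm.1 hx
      have hx2 : ‖w‖ ≤ ‖x‖ + ‖x - w‖ := by
        calc ‖w‖ = ‖x - (x - w)‖ := by rw [sub_sub_cancel]
          _ ≤ ‖x‖ + ‖x - w‖ := norm_sub_le _ _
      rw [hw] at hx2
      linarith
    have h2 : ∫ y in ball w (2⁻¹:ℝ), ‖y‖^s ≤ ∫ y in ball w 1, ‖y‖^s :=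
      setIntegral_mono_set huint
        (Filter.Eventually.of_forall fun y => Real.rpow_nonneg (norm_nonneg y) _)
        (HasSubset.Subset.eventuallyLE hsubhalf)
    rw [vol_ball_toReal m hm w (by norm_num : (0:ℝ) ≤ 2⁻¹)] at h1
    have h := le_avg (μ := volume) (s := ball w 1) (h1.trans h2)
    rw [vol_ball_toReal m hm w zero_le_one, one_pow, one_mul] at h
    calc c₁ = (2⁻¹:ℝ)^s * ((2⁻¹:ℝ)^(m:ℕ) * vE m) / vE m := by
          rw [hc₁def]
          field_simp
      _ ≤ _ := h
  have hTX : T ^ (p-1) = X := by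
    rw [hTdef, ← Real.rpow_mul hX0.le, inv_mul_cancel₀ hp1.ne', Real.rpow_one]
  have havgσ0 : (0:ℝ) ≤ (N:ℝ) * a := by positivity
  refine ⟨w, 1, one_pos, ?_⟩
  calc C = c₁ * (C / c₁) := by field_simp
    _ ≤ c₁ * X := mul_le_mul_of_nonneg_left (le_max_left _ _) hc₁.le
    _ = c₁ * (T ^ (p-1)) := by rw [hTX]
    _ < c₁ * (((N:ℝ) * a) ^ (p-1)) :=
        mul_lt_mul_of_pos_left (Real.rpow_lt_rpow hT.le hNa hp1) hc₁
    _ ≤ (⨍ y in ball w 1, ‖y‖ ^ s) * (⨍ y in ball w 1, ‖y‖ ^ (-β)) ^ (p-1) := by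
        refine mul_le_mul huavg (Real.rpow_le_rpow havgσ0 hσavg hp1.le)
          (Real.rpow_nonneg havgσ0 _) ?_
        exact avg_nonneg measurableSet_ball (fun x _ => Real.rpow_nonneg (norm_nonneg x) _)

lemma avg_fst {d : ℕ} (g : EuclideanSpace ℝ (Fin (d-1)) → ℝ) (hg : Measurable g)
    (z : Pt d) {r : ℝ} (hr : 0 < r) :
    (⨍ x in ball z r, g x.1) = ⨍ y in ball z.1 r, g y := by
  have hball : ball z r = ball z.1 r ×ˢ ball z.2 r := by
    rw [ball_prod_same]
  haveI : IsFiniteMeasure (volume.restrict (ball z.2 r)) :=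
    ⟨by rw [Measure.restrict_apply_univ]; exact measure_ball_lt_top⟩
  have hmap : ∫ x in ball z.1 r ×ˢ ball z.2 r, g x.1
      = (volume (ball z.2 r)).toReal • ∫ y in ball z.1 r, g y := by
    rw [show (volume : Measure (Pt d)) = (volume : Measure (EuclideanSpace ℝ (Fin (d-1)))).prod
      (volume : Measure ℝ) from Measure.volume_eq_prod _ _, ← Measure.prod_restrict]
    calc ∫ x, g x.1 ∂((volume.restrict (ball z.1 r)).prod (volume.restrict (ball z.2 r)))
        = ∫ y, g y ∂(Measure.map Prod.fst
            ((volume.restrict (ball z.1 r)).prod (volume.restrict (ball z.2 r)))) :=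
          (integral_map measurable_fst.aemeasurable hg.aestronglyMeasurable).symm
      _ = ∫ y, g y ∂((volume.restrict (ball z.2 r) univ) • volume.restrict (ball z.1 r)) := by
          rw [Measure.map_fst_prod]
      _ = ((volume.restrict (ball z.2 r)) univ).toReal • ∫ y in ball z.1 r, g y :=
          integral_smul_measure _ _
      _ = (volume (ball z.2 r)).toReal • ∫ y in ball z.1 r, g y := by
          rw [Measure.restrict_apply_univ]
  rw [setAverage_eq, setAverage_eq, hball, hmap]
  have hvol : volume (ball z.1 r ×ˢ ball z.2 r) = volume (ball z.1 r) * volume (ball z.2 r) := by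
    rw [show (volume : Measure (Pt d)) = (volume : Measure (EuclideanSpace ℝ (Fin (d-1)))).prod
      (volume : Measure ℝ) from Measure.volume_eq_prod _ _, Measure.prod_prod]
  rw [measureReal_def, measureReal_def, hvol, ENNReal.toReal_mul, smul_eq_mul, smul_eq_mul, smul_eq_mul]
  have hb : (volume (ball z.2 r)).toReal = 2 * r := by
    rw [Real.volume_ball, ENNReal.toReal_ofReal (by linarith)]
  rw [hb, mul_inv]
  have hr0 : r ≠ 0 := ne_of_gt hr
  field_simp

lemma apRatio_eq {d : ℕ} (p s : ℝ) (hp : 1 < p) (z : Pt d) {r : ℝ} (hr : 0 < r) :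
    apRatio p (fun x : Pt d => ‖x.1‖ ^ s) z r =
      (⨍ y in ball z.1 r, ‖y‖ ^ s) * (⨍ y in ball z.1 r, ‖y‖ ^ (-(s/(p-1)))) ^ (p-1) := by
  have hp1 : p - 1 ≠ 0 := sub_ne_zero.2 (ne_of_gt hp)
  have hfun : (fun y : EuclideanSpace ℝ (Fin (d-1)) => (‖y‖ ^ s) ^ (-(1/(p-1))))
      = fun y => ‖y‖ ^ (-(s/(p-1))) := by
    funext y
    rw [← Real.rpow_mul (norm_nonneg y)]
    congr 1
    field_simp
  show (⨍ x in ball z r, ‖x.1‖ ^ s) *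
      (⨍ x in ball z r, (‖x.1‖ ^ s) ^ (-(1 / (p - 1)))) ^ (p - 1) = _
  rw [avg_fst (fun y => ‖y‖ ^ s) (by fun_prop) z hr,
    avg_fst (fun y => (‖y‖ ^ s) ^ (-(1/(p-1)))) (by fun_prop) z hr, hfun]

end ApAux

/-- For `d ≥ 2` and `s ≥ 0`, the weight `u(x) = |x'|^s` belongs to `A_p(ℝ^d)`
if and only if `s < (p-1)(d-1)`. -/
theorem memAp_norm_fst_rpow_iff (d : ℕ) (hd : 2 ≤ d) (p s : ℝ) (hp : 1 < p) (hs : 0 ≤ s) :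
    MemAp (d := d) p (fun x => ‖x.1‖ ^ s) ↔ s < (p - 1) * ((d : ℝ) - 1) := by
  have hm : 0 < d - 1 := by omega
  have hcast : ((d - 1 : ℕ) : ℝ) = (d : ℝ) - 1 := by
    have h1 : (1:ℕ) ≤ d := by omega
    push_cast [h1]
    ring
  constructor
  · rintro ⟨hloc, C, hC⟩
    by_contra hge
    push_neg at hge
    rw [← hcast] at hge
    obtain ⟨w, r, hr, hgt⟩ := ApAux.reverse (d-1) hm hp hs hge C
    have h := hC (w, 0) r hr
    rw [ApAux.apRatio_eq p s hp (w, 0) hr] at h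
    exact absurd h (not_le.2 hgt)
  · intro hlt
    constructor
    · apply Continuous.locallyIntegrable
      exact Continuous.rpow_const (continuous_fst.norm) (fun x => Or.inr hs)
    · obtain ⟨C, hC⟩ := ApAux.forward (d-1) hm hp hs (by rw [hcast]; exact hlt)
      refine ⟨C, fun z r hr => ?_⟩
      rw [ApAux.apRatio_eq p s hp z hr]
      exact hC z.1 r hr
end

section
/- Let d ≥ 2 and P > 1. Define w(x) = max(1, |x'|^d, |x_d + |x'|^2|^d) on ℝ^d. There exists δ > 0 such that w^t belongs to the Muckenhoupt class A_p(ℝ^d) for all |t| ≤ δ and all p ∈ [P, ∞). -/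
open MeasureTheory Metric

/-- The weight `w(x) = max(1, |x'|^d, |x_d + |x'|²|^d)`. -/
noncomputable def wW (d : ℕ) (x : Pt d) : ℝ :=
  max 1 (max (‖x.1‖ ^ d) (|x.2 + ‖x.1‖ ^ 2| ^ d))

open Real
open scoped RealInnerProductSpace ENNReal
set_option maxHeartbeats 1000000

section Aux

/-- difference of square roots -/
lemma my_sqrt_sub_le {a b : ℝ} (ha : 0 ≤ a) (hab : a ≤ b) :
    Real.sqrt b - Real.sqrt a ≤ Real.sqrt (b - a) := by
  have h1 : b ≤ (Real.sqrt a + Real.sqrt (b - a)) ^ 2 := by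
    have := Real.sq_sqrt ha
    have := Real.sq_sqrt (sub_nonneg.2 hab)
    nlinarith [Real.sqrt_nonneg a, Real.sqrt_nonneg (b - a),
      mul_nonneg (Real.sqrt_nonneg a) (Real.sqrt_nonneg (b - a))]
  have h2 : Real.sqrt b ≤ Real.sqrt a + Real.sqrt (b - a) := by
    calc Real.sqrt b ≤ Real.sqrt ((Real.sqrt a + Real.sqrt (b - a)) ^ 2) := Real.sqrt_le_sqrt h1
    _ = Real.sqrt a + Real.sqrt (b - a) := by
        rw [Real.sqrt_sq (by positivity)]
  linarith

/-- b^(k+1) ≤ a^(k+1) + (k+1) b^k (b-a) -/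
lemma my_pow_diff_le (k : ℕ) {a b : ℝ} (ha : 0 ≤ a) (hab : a ≤ b) :
    b ^ (k+1) ≤ a ^ (k+1) + (k+1) * b ^ k * (b - a) := by
  induction k with
  | zero => norm_num
  | succ m ih =>
    have hb : 0 ≤ b := le_trans ha hab
    have hpow : a ^ (m+1) ≤ b ^ (m+1) := pow_le_pow_left₀ ha hab _
    have h1 : b ^ (m+2) = b * b ^ (m+1) := by ring
    have h2 : b * b ^ (m+1) ≤ b * (a ^ (m+1) + (m+1) * b ^ m * (b - a)) := by
      apply mul_le_mul_of_nonneg_left ih hb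
    have h3 : b * (a ^ (m+1) + (m+1) * b ^ m * (b - a))
        = b * a ^ (m+1) + (m+1) * b ^ (m+1) * (b - a) := by ring
    have h4 : b * a ^ (m+1) = a * a ^ (m+1) + a ^ (m+1) * (b - a) := by ring
    have h5 : a ^ (m+1) * (b - a) ≤ b ^ (m+1) * (b - a) :=
      mul_le_mul_of_nonneg_right hpow (by linarith)
    have : b ^ (m+2) ≤ a ^ (m+2) + ((m+1) + 1) * b ^ (m+1) * (b - a) := by
      calc b ^ (m+2) = b * b ^ (m+1) := h1
      _ ≤ b * a ^ (m+1) + (m+1) * b ^ (m+1) * (b-a) := by rw [← h3]; exact h2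
      _ = a ^ (m+2) + a ^ (m+1) * (b-a) + (m+1) * b^(m+1) * (b-a) := by ring
      _ ≤ a ^ (m+2) + b ^ (m+1) * (b-a) + (m+1) * b^(m+1) * (b-a) := by linarith
      _ = a ^ (m+2) + ((m+1) + 1) * b ^ (m+1) * (b - a) := by ring
    convert this using 3
    push_cast; ring

/-- dyadic localization -/
lemma my_dyadic (m : ℕ) {w : ℝ} (h1 : 1 ≤ w) : w < 2 ^ (m+1) →
    ∃ k ≤ m, (2:ℝ) ^ k ≤ w ∧ w < 2 ^ (k+1) := by
  induction m with
  | zero => intro h; exact ⟨0, le_refl _, by simpa using h1, by simpa using h⟩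
  | succ m ih =>
    intro h
    by_cases hc : w < 2 ^ (m+1)
    · obtain ⟨k, hk, h2, h3⟩ := ih hc
      exact ⟨k, le_trans hk (Nat.le_succ m), h2, h3⟩
    · exact ⟨m+1, le_refl _, not_lt.1 hc, h⟩

lemma my_abs_interval {lo v hi : ℝ} (h1 : lo ≤ v) (h2 : v ≤ hi) : |v| ≤ max |lo| |hi| :=
  abs_le_max_abs_abs h1 h2

/-- geometric sum bound -/
lemma my_geom_bound {x : ℝ} (hx : 1 < x) (m : ℕ) :
    ∑ k ∈ Finset.range m, x ^ k ≤ x ^ m / (x - 1) := by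
  have h0 : x - 1 > 0 := by linarith
  have := geom_sum_eq (ne_of_gt hx) m
  rw [this]
  gcongr
  linarith

end Aux

/-- the basic weight `W` with `wW = W ^ d`. -/
noncomputable def Wb (d : ℕ) (x : Pt d) : ℝ :=
  max 1 (max ‖x.1‖ |x.2 + ‖x.1‖ ^ 2|)

lemma one_le_Wb (d : ℕ) (x : Pt d) : 1 ≤ Wb d x := le_max_left _ _

lemma Wb_pos (d : ℕ) (x : Pt d) : 0 < Wb d x := lt_of_lt_of_le one_pos (one_le_Wb d x)

lemma Wb_cont (d : ℕ) : Continuous (Wb d) := by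
  apply continuous_const.max
  apply Continuous.max
  · exact continuous_fst.norm
  · exact (continuous_snd.add ((continuous_fst.norm).pow 2)).abs

lemma max_pow_eq {u v : ℝ} (d : ℕ) (hu : 0 ≤ u) (hv : 0 ≤ v) :
    max (u ^ d) (v ^ d) = (max u v) ^ d := by
  rcases le_total u v with h | h
  · rw [max_eq_right (pow_le_pow_left₀ hu h d), max_eq_right h]
  · rw [max_eq_left (pow_le_pow_left₀ hv h d), max_eq_left h]

lemma wW_eq_Wb_pow (d : ℕ) (x : Pt d) : wW d x = (Wb d x) ^ d := by
  unfold wW Wb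
  rw [max_pow_eq d (norm_nonneg _) (abs_nonneg _)]
  rw [show (1:ℝ) = 1 ^ d from (one_pow d).symm]
  rw [max_pow_eq d zero_le_one (le_max_iff.2 (Or.inl (norm_nonneg _))), one_pow]

lemma wW_rpow (d : ℕ) (x : Pt d) (t : ℝ) : (wW d x) ^ t = (Wb d x) ^ ((d:ℝ) * t) := by
  rw [wW_eq_Wb_pow, ← Real.rpow_natCast (Wb d x) d, ← Real.rpow_mul (Wb_pos d x).le]

lemma Wb_rpow_cont (d : ℕ) (c : ℝ) : Continuous fun x => (Wb d x) ^ c :=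
  (Wb_cont d).rpow_const (fun x => Or.inl (ne_of_gt (Wb_pos d x)))

section Geom

variable {d : ℕ}

lemma ntE (hd : 2 ≤ d) : Nontrivial (EuclideanSpace ℝ (Fin (d-1))) := by
  haveI : Nonempty (Fin (d-1)) := ⟨⟨0, by omega⟩⟩
  infer_instance

lemma vol_ball' (hd : 2 ≤ d) (c : EuclideanSpace ℝ (Fin (d-1))) {r : ℝ} (hr : 0 ≤ r) :
    volume (ball c r)
      = ENNReal.ofReal (r ^ (d-1)) * volume (ball (0 : EuclideanSpace ℝ (Fin (d-1))) 1) := by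
  haveI := ntE hd
  rw [Measure.addHaar_ball volume c hr, finrank_euclideanSpace_fin]

lemma vol_annulus (hd : 2 ≤ d) {ρ1 ρ2 : ℝ} (h1 : 0 ≤ ρ1) (h12 : ρ1 ≤ ρ2) :
    volume (closedBall (0 : EuclideanSpace ℝ (Fin (d-1))) ρ2 \ ball 0 ρ1)
      ≤ ENNReal.ofReal (ρ2 ^ (d-1) - ρ1 ^ (d-1))
        * volume (ball (0 : EuclideanSpace ℝ (Fin (d-1))) 1) := by
  haveI := ntE hd
  have h2 : (0:ℝ) ≤ ρ2 := le_trans h1 h12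
  have hsub : ball (0 : EuclideanSpace ℝ (Fin (d-1))) ρ1 ⊆ closedBall 0 ρ2 :=
    (ball_subset_closedBall).trans (closedBall_subset_closedBall h12)
  have hfin : volume (ball (0 : EuclideanSpace ℝ (Fin (d-1))) ρ1) ≠ ⊤ :=
    (measure_ball_lt_top).ne
  rw [measure_diff hsub measurableSet_ball.nullMeasurableSet hfin]
  rw [Measure.addHaar_closedBall volume _ h2, Measure.addHaar_ball volume _ h1,
    finrank_euclideanSpace_fin]
  rw [tsub_le_iff_right, ← add_mul, ← ENNReal.ofReal_add (by nlinarith [pow_le_pow_left₀ h1 h12 (d-1)]) (by positivity)]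
  have : ρ2 ^ (d-1) - ρ1 ^ (d-1) + ρ1 ^ (d-1) = ρ2 ^ (d-1) := by ring
  rw [this]

lemma slab_bound (hd : 2 ≤ d) (v : EuclideanSpace ℝ (Fin (d-1))) (hv : ‖v‖ = 1)
    (S : Set (EuclideanSpace ℝ (Fin (d-1)))) (hSm : MeasurableSet S)
    {s r : ℝ} (hs : 0 < s) (hsr : s ≤ 2*r) (hr : 0 < r)
    (c : EuclideanSpace ℝ (Fin (d-1))) (hball : S ⊆ ball c r)
    (hfib : ∀ x ∈ S, ∀ y ∈ S, x - ⟪v, x⟫ • v = y - ⟪v, y⟫ • v → ⟪v, x⟫ - ⟪v, y⟫ ≤ s) :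
    volume S ≤ ENNReal.ofReal (7^(d-1) * r^(d-1) * (s/r))
      * volume (ball (0 : EuclideanSpace ℝ (Fin (d-1))) 1) := by
  haveI := ntE hd
  have hvv : ⟪v, v⟫ = 1 := by
    rw [real_inner_self_eq_norm_sq, hv]; norm_num
  set N := ⌈r / s⌉₊ with hN
  have hrs : 0 < r / s := by positivity
  have hN1 : 1 ≤ N := Nat.one_le_iff_ne_zero.2 (by
    simp only [hN, ne_eq, Nat.ceil_eq_zero, not_le]
    exact hrs)
  have hNge : r / s ≤ (N:ℝ) := Nat.le_ceil _
  set U : ℕ → Set (EuclideanSpace ℝ (Fin (d-1))) :=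
    fun j => (fun x => x - ((j:ℝ)*(2*s)) • v) ⁻¹' S with hU
  have volU : ∀ j, volume (U j) = volume S := by
    intro j
    have : U j = (fun x => x + (-(((j:ℝ)*(2*s)) • v))) ⁻¹' S := by
      ext x; simp [hU, sub_eq_add_neg]
    rw [this, measure_preimage_add_right]
  have hinner : ∀ (x : EuclideanSpace ℝ (Fin (d-1))) (a : ℝ),
      ⟪v, x - a • v⟫ = ⟪v, x⟫ - a := by
    intro x a
    rw [inner_sub_right, real_inner_smul_right, hvv]; ring
  have hfibeq : ∀ (x : EuclideanSpace ℝ (Fin (d-1))) (a : ℝ),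
      (x - a • v) - ⟪v, x - a • v⟫ • v = x - ⟪v, x⟫ • v := by
    intro x a
    rw [hinner]
    rw [sub_smul]
    abel
  -- pairwise disjoint
  have hdisj : (↑(Finset.range N) : Set ℕ).Pairwise (Function.onFun Disjoint U) := by
    intro i _ j _ hij
    rw [Function.onFun, Set.disjoint_left]
    intro x hxi hxj
    have hyi : x - ((i:ℝ)*(2*s)) • v ∈ S := hxi
    have hyj : x - ((j:ℝ)*(2*s)) • v ∈ S := hxj
    have hfe : (x - ((i:ℝ)*(2*s)) • v) - ⟪v, x - ((i:ℝ)*(2*s)) • v⟫ • v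
        = (x - ((j:ℝ)*(2*s)) • v) - ⟪v, x - ((j:ℝ)*(2*s)) • v⟫ • v := by
      rw [hfibeq, hfibeq]
    have h1 := hfib _ hyi _ hyj hfe
    have h2 := hfib _ hyj _ hyi hfe.symm
    rw [hinner, hinner] at h1 h2
    rcases Nat.lt_or_ge i j with h | h
    · have : (i:ℝ) + 1 ≤ (j:ℝ) := by exact_mod_cast h
      nlinarith
    · have hlt : j < i := lt_of_le_of_ne h (Ne.symm hij)
      have : (j:ℝ) + 1 ≤ (i:ℝ) := by exact_mod_cast hlt
      nlinarith
  have hmeas : ∀ j ∈ Finset.range N, MeasurableSet (U j) := by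
    intro j _
    exact hSm.preimage ((measurable_id.sub_const (((j:ℝ)*(2*s)) • v)) : Measurable fun x => x - ((j:ℝ)*(2*s)) • v)
  -- covering
  have hcov : ∀ j ∈ Finset.range N, U j ⊆ ball c (7*r) := by
    intro j hj x hx
    have hy : x - ((j:ℝ)*(2*s)) • v ∈ ball c r := hball hx
    rw [mem_ball] at hy ⊢
    have hjN : (j:ℝ) ≤ (N:ℝ) := by
      exact_mod_cast le_of_lt (Finset.mem_range.1 hj)
    have h2sN : (N:ℝ) * (2*s) ≤ 2*r + 2*s := by
      have : (N:ℝ) ≤ r/s + 1 := le_of_lt (Nat.ceil_lt_add_one hrs.le)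
      calc (N:ℝ) * (2*s) ≤ (r/s + 1) * (2*s) := by
            apply mul_le_mul_of_nonneg_right this (by positivity)
      _ = 2*r + 2*s := by field_simp
    have hnorm : ‖((j:ℝ)*(2*s)) • v‖ ≤ 2*r + 2*s := by
      rw [norm_smul, hv, mul_one]
      rw [Real.norm_eq_abs, abs_of_nonneg (by positivity)]
      calc (j:ℝ) * (2*s) ≤ (N:ℝ) * (2*s) := by
            apply mul_le_mul_of_nonneg_right hjN (by positivity)
      _ ≤ 2*r + 2*s := h2sN
    calc dist x c ≤ dist (x - ((j:ℝ)*(2*s)) • v) c + ‖((j:ℝ)*(2*s)) • v‖ := by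
          rw [dist_eq_norm, dist_eq_norm]
          have : x - c = (x - ((j:ℝ)*(2*s)) • v - c) + ((j:ℝ)*(2*s)) • v := by abel
          rw [this]
          exact norm_add_le _ _
    _ < r + (2*r + 2*s) := by linarith [hy]
    _ ≤ 7*r := by linarith
  -- sum
  have hsum : (N : ℝ≥0∞) * volume S ≤ volume (ball c (7*r)) := by
    have h1 : ∑ j ∈ Finset.range N, volume (U j) = volume (⋃ j ∈ Finset.range N, U j) :=
      (measure_biUnion_finset hdisj hmeas).symm
    have h2 : volume (⋃ j ∈ Finset.range N, U j) ≤ volume (ball c (7*r)) := by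
      apply measure_mono
      exact Set.iUnion₂_subset hcov
    calc (N : ℝ≥0∞) * volume S = ∑ j ∈ Finset.range N, volume (U j) := by
          simp [volU, Finset.sum_const, nsmul_eq_mul]
    _ ≤ volume (ball c (7*r)) := h1 ▸ h2
  have hvol7 : volume (ball c (7*r)) = ENNReal.ofReal ((7*r) ^ (d-1)) * volume (ball (0 : EuclideanSpace ℝ (Fin (d-1))) 1) :=
    vol_ball' hd c (by positivity)
  -- conclude
  have key : volume S ≤ ENNReal.ofReal (s/r) * ((N : ℝ≥0∞) * volume S) := by
    have h1 : (1:ℝ≥0∞) ≤ ENNReal.ofReal (s/r) * (N : ℝ≥0∞) := by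
      have : ((N:ℕ) : ℝ≥0∞) = ENNReal.ofReal ((N:ℝ)) := by
        rw [ENNReal.ofReal_natCast]
      rw [this, ← ENNReal.ofReal_mul (by positivity)]
      rw [show (1:ℝ≥0∞) = ENNReal.ofReal 1 by simp]
      apply ENNReal.ofReal_le_ofReal
      have heq : s/r * (r/s) = 1 := by field_simp
      calc (1:ℝ) = s/r * (r/s) := heq.symm
      _ ≤ s/r * N := by apply mul_le_mul_of_nonneg_left hNge (by positivity)
    calc volume S = 1 * volume S := (one_mul _).symm
    _ ≤ (ENNReal.ofReal (s/r) * (N : ℝ≥0∞)) * volume S := by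
        apply mul_le_mul_left h1
    _ = ENNReal.ofReal (s/r) * ((N : ℝ≥0∞) * volume S) := by ring
  calc volume S ≤ ENNReal.ofReal (s/r) * ((N : ℝ≥0∞) * volume S) := key
  _ ≤ ENNReal.ofReal (s/r) * volume (ball c (7*r)) := by
      apply mul_le_mul_right hsum
  _ = ENNReal.ofReal (s/r) * (ENNReal.ofReal ((7*r) ^ (d-1)) * volume (ball (0 : EuclideanSpace ℝ (Fin (d-1))) 1)) := by
      rw [hvol7]
  _ = ENNReal.ofReal (7^(d-1) * r^(d-1) * (s/r))
      * volume (ball (0 : EuclideanSpace ℝ (Fin (d-1))) 1) := by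
      rw [← mul_assoc, ← ENNReal.ofReal_mul (by positivity)]
      congr 2
      rw [mul_pow]
      ring

end Geom

section Main

variable {d : ℕ}

/-- explicit upper bound for `Wb` on `ball z r` -/
noncomputable def Mz (z : Pt d) (r : ℝ) : ℝ :=
  max 1 (max (‖z.1‖ + r)
    (max |z.2 - r + (max 0 (‖z.1‖ - r))^2| |z.2 + r + (‖z.1‖ + r)^2|))

lemma one_le_Mz (z : Pt d) (r : ℝ) : 1 ≤ Mz z r := le_max_left _ _

lemma Mz_pos (z : Pt d) (r : ℝ) : 0 < Mz z r := lt_of_lt_of_le one_pos (one_le_Mz z r)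

lemma norm_fst_bounds {z : Pt d} {r : ℝ} {x : Pt d} (hx : x ∈ ball z r) :
    max 0 (‖z.1‖ - r) ≤ ‖x.1‖ ∧ ‖x.1‖ < ‖z.1‖ + r ∧ |x.2 - z.2| < r := by
  rw [← ball_prod_same] at hx
  obtain ⟨hx1, hx2⟩ := hx
  rw [mem_ball, dist_eq_norm] at hx1
  rw [mem_ball, Real.dist_eq] at hx2
  refine ⟨?_, ?_, hx2⟩
  · apply max_le (norm_nonneg _)
    have : ‖z.1‖ - ‖x.1‖ ≤ ‖x.1 - z.1‖ := by
      calc ‖z.1‖ - ‖x.1‖ ≤ ‖z.1 - x.1‖ := norm_sub_norm_le _ _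
      _ = ‖x.1 - z.1‖ := by rw [norm_sub_rev]
    linarith
  · calc ‖x.1‖ = ‖z.1 + (x.1 - z.1)‖ := by congr 1; abel
    _ ≤ ‖z.1‖ + ‖x.1 - z.1‖ := norm_add_le _ _
    _ < ‖z.1‖ + r := by linarith

lemma Wb_le_Mz {z : Pt d} {r : ℝ} {x : Pt d} (hx : x ∈ ball z r) : Wb d x ≤ Mz z r := by
  obtain ⟨h1, h2, h3⟩ := norm_fst_bounds hx
  have hn0 : (0:ℝ) ≤ ‖x.1‖ := norm_nonneg _
  have hsq1 : (max 0 (‖z.1‖ - r))^2 ≤ ‖x.1‖^2 := by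
    apply pow_le_pow_left₀ (le_max_left _ _) h1
  have hsq2 : ‖x.1‖^2 ≤ (‖z.1‖ + r)^2 := by
    apply pow_le_pow_left₀ hn0 h2.le
  unfold Wb Mz
  apply max_le (le_max_left _ _)
  apply le_max_of_le_right
  apply max_le
  · exact le_max_of_le_left h2.le
  · apply le_max_of_le_right
    apply abs_le_max_abs_abs (b := x.2 + ‖x.1‖^2) <;> nlinarith [abs_lt.1 h3]

/-- the horizontal projection set -/
def Eproj (z : Pt d) (r lam : ℝ) : Set (EuclideanSpace ℝ (Fin (d-1))) :=
  {x' | x' ∈ ball z.1 r ∧ ‖x'‖ < lam ∧ |z.2 + ‖x'‖^2| < lam + r}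

lemma Eproj_open (z : Pt d) (r lam : ℝ) : IsOpen (Eproj z r lam) := by
  unfold Eproj
  apply IsOpen.inter isOpen_ball
  apply IsOpen.inter
  · exact isOpen_lt continuous_norm continuous_const
  · exact isOpen_lt ((continuous_const.add (continuous_norm.pow 2)).abs) continuous_const

lemma slice_bound (z : Pt d) {r lam : ℝ} (hr : 0 < r) :
    volume (ball z r ∩ {x : Pt d | Wb d x < lam}) ≤
      volume (Eproj z r lam) * ENNReal.ofReal (min (2*r) (2*lam)) := by
  set S := ball z r ∩ {x : Pt d | Wb d x < lam} with hS
  have hSm : MeasurableSet S := by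
    apply MeasurableSet.inter measurableSet_ball
    exact (isOpen_lt (Wb_cont d) continuous_const).measurableSet
  have hEm : MeasurableSet (Eproj z r lam) := (Eproj_open z r lam).measurableSet
  rw [Measure.volume_eq_prod, Measure.prod_apply hSm]
  have hslice : ∀ x' : EuclideanSpace ℝ (Fin (d-1)),
      volume (Prod.mk x' ⁻¹' S) ≤
        (Eproj z r lam).indicator (fun _ => ENNReal.ofReal (min (2*r) (2*lam))) x' := by
    intro x'
    by_cases hxE : x' ∈ Eproj z r lam
    · rw [Set.indicator_of_mem hxE]
      have hsub : Prod.mk x' ⁻¹' S ⊆ Set.Ioo (z.2 - r) (z.2 + r) ∩ Set.Ioo (-‖x'‖^2 - lam) (-‖x'‖^2 + lam) := by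
        intro t ht
        obtain ⟨htb, htw⟩ := ht
        rw [← ball_prod_same] at htb
        obtain ⟨_, ht2⟩ := htb
        rw [mem_ball, Real.dist_eq, abs_lt] at ht2
        have hW : Wb d (x', t) < lam := htw
        unfold Wb at hW
        simp only [max_lt_iff] at hW
        obtain ⟨h1lam, _, habs⟩ := hW
        have habs' := abs_lt.1 habs
        constructor
        · constructor <;> [linarith [ht2.1]; linarith [ht2.2]]
        · constructor <;> [linarith [habs'.1]; linarith [habs'.2]]
      calc volume (Prod.mk x' ⁻¹' S) ≤
          volume (Set.Ioo (z.2 - r) (z.2 + r) ∩ Set.Ioo (-‖x'‖^2 - lam) (-‖x'‖^2 + lam)) :=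
            measure_mono hsub
      _ ≤ ENNReal.ofReal (min (2*r) (2*lam)) := by
          rcases le_total (2*r) (2*lam) with h | h
          · rw [min_eq_left h]
            calc volume (Set.Ioo (z.2 - r) (z.2 + r) ∩ Set.Ioo (-‖x'‖^2 - lam) (-‖x'‖^2 + lam))
                ≤ volume (Set.Ioo (z.2 - r) (z.2 + r)) := measure_mono Set.inter_subset_left
            _ = ENNReal.ofReal (2*r) := by rw [Real.volume_Ioo]; congr 1; ring
          · rw [min_eq_right h]
            calc volume (Set.Ioo (z.2 - r) (z.2 + r) ∩ Set.Ioo (-‖x'‖^2 - lam) (-‖x'‖^2 + lam))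
                ≤ volume (Set.Ioo (-‖x'‖^2 - lam) (-‖x'‖^2 + lam)) := measure_mono Set.inter_subset_right
            _ = ENNReal.ofReal (2*lam) := by rw [Real.volume_Ioo]; congr 1; ring
    · rw [Set.indicator_of_notMem hxE]
      have hempty : Prod.mk x' ⁻¹' S = ∅ := by
        rw [Set.eq_empty_iff_forall_notMem]
        intro t ht
        obtain ⟨htb, htw⟩ := ht
        rw [← ball_prod_same] at htb
        obtain ⟨ht1, ht2⟩ := htb
        rw [mem_ball, Real.dist_eq, abs_lt] at ht2
        have hW : Wb d (x', t) < lam := htw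
        unfold Wb at hW
        simp only [max_lt_iff] at hW
        obtain ⟨h1lam, hnrm, habs⟩ := hW
        apply hxE
        refine ⟨ht1, hnrm, ?_⟩
        have : |z.2 + ‖x'‖^2| ≤ |z.2 - t| + |t + ‖x'‖^2| := by
          calc |z.2 + ‖x'‖^2| = |(z.2 - t) + (t + ‖x'‖^2)| := by congr 1; ring
          _ ≤ |z.2 - t| + |t + ‖x'‖^2| := abs_add_le _ _
        have h2 : |z.2 - t| < r := by rw [abs_lt]; constructor <;> linarith [ht2.1, ht2.2]
        linarith [this, habs]
      rw [hempty, measure_empty]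
  calc ∫⁻ x', volume (Prod.mk x' ⁻¹' S) ≤
      ∫⁻ x', (Eproj z r lam).indicator (fun _ => ENNReal.ofReal (min (2*r) (2*lam))) x' :=
        lintegral_mono hslice
  _ = volume (Eproj z r lam) * ENNReal.ofReal (min (2*r) (2*lam)) := by
      rw [lintegral_indicator hEm, setLIntegral_const, mul_comm]

end Main

noncomputable def Kc (d : ℕ) : ℝ := 10 * d * 3^d + 20 * 7^d

lemma Kc_ge (d : ℕ) (hd : 2 ≤ d) : 3 ≤ Kc d := by
  unfold Kc
  have h1 : (1:ℝ) ≤ 3^d := one_le_pow₀ (by norm_num)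
  have h2 : (1:ℝ) ≤ 7^d := one_le_pow₀ (by norm_num)
  have h3 : (2:ℝ) ≤ (d:ℝ) := by exact_mod_cast hd
  nlinarith

lemma Kc_pos (d : ℕ) (hd : 2 ≤ d) : 0 < Kc d := lt_of_lt_of_le (by norm_num) (Kc_ge d hd)

lemma scalar_claim {lam r T w mn : ℝ} (hlam : 1 < lam) (hr : 0 < r) (hT3 : T ≤ 3*r)
    (hTr : r ≤ T) (hw0 : 0 ≤ w) (hw2 : w^2 ≤ 2*(lam+r)) (hmn0 : 0 ≤ mn)
    (hmn1 : mn ≤ 2*r) (hmn2 : mn ≤ 2*lam) :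
    w * mn * Real.sqrt (7*r*T) ≤ 20 * Real.sqrt lam * r^2 := by
  have h7 : (0:ℝ) ≤ 7*r*T := by nlinarith
  have hsl : (0:ℝ) ≤ Real.sqrt lam := Real.sqrt_nonneg _
  apply (pow_le_pow_iff_left₀ (by positivity) (by positivity) (two_ne_zero)).1
  have e1 : (w * mn * Real.sqrt (7*r*T))^2 = w^2 * mn^2 * (7*r*T) := by
    rw [mul_pow, mul_pow, Real.sq_sqrt h7]
  have e2 : (20 * Real.sqrt lam * r^2)^2 = 400 * lam * (r^2)^2 := by
    rw [mul_pow, mul_pow, Real.sq_sqrt (by linarith : (0:ℝ) ≤ lam)]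
    ring
  rw [e1, e2]
  have h77 : 7*r*T ≤ 21*r^2 := by nlinarith
  have h770 : (0:ℝ) ≤ 7*r*T := h7
  rcases le_total lam r with h | h
  · have hmm : mn^2 ≤ 4*lam^2 := by nlinarith
    have hww : w^2 ≤ 4*r := by nlinarith
    have step : w^2 * mn^2 * (7*r*T) ≤ (4*r) * (4*lam^2) * (21*r^2) := by
      apply mul_le_mul (mul_le_mul hww hmm (by positivity) (by positivity)) h77 h770
      positivity
    calc w^2 * mn^2 * (7*r*T) ≤ (4*r) * (4*lam^2) * (21*r^2) := step
    _ ≤ 400 * lam * (r^2)^2 := by nlinarith [mul_pos hr hr, mul_pos (mul_pos hr hr) hr, sq_nonneg (lam - r)]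
  · have hmm : mn^2 ≤ 4*r^2 := by nlinarith
    have hww : w^2 ≤ 4*lam := by nlinarith
    have step : w^2 * mn^2 * (7*r*T) ≤ (4*lam) * (4*r^2) * (21*r^2) := by
      apply mul_le_mul (mul_le_mul hww hmm (by positivity) (by positivity)) h77 h770
      positivity
    calc w^2 * mn^2 * (7*r*T) ≤ (4*lam) * (4*r^2) * (21*r^2) := step
    _ ≤ 400 * lam * (r^2)^2 := by nlinarith [mul_pos hr hr]

lemma sqrt_budget {lam M r T Y Z : ℝ} (hlam : 0 < lam) (hM : 0 < M) (hM7 : M ≤ 7*r*T)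
    (hr : 0 < r) (hT : 0 < T) (hY : 0 ≤ Y) (hZ : 0 ≤ Z)
    (h : Y * Real.sqrt (7*r*T) ≤ Z * Real.sqrt lam) :
    Y ≤ Z * Real.sqrt (lam / M) := by
  have h7 : (0:ℝ) < 7*r*T := by nlinarith
  have hs7 : (0:ℝ) < Real.sqrt (7*r*T) := Real.sqrt_pos.2 h7
  have hstep : Y ≤ Z * (Real.sqrt lam / Real.sqrt (7*r*T)) := by
    rw [mul_div_assoc' Z _ _, le_div_iff₀ hs7]
    linarith
  calc Y ≤ Z * (Real.sqrt lam / Real.sqrt (7*r*T)) := hstep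
  _ = Z * Real.sqrt (lam / (7*r*T)) := by rw [Real.sqrt_div hlam.le]
  _ ≤ Z * Real.sqrt (lam / M) := by
      apply mul_le_mul_of_nonneg_left ?_ hZ
      apply Real.sqrt_le_sqrt
      apply div_le_div_of_nonneg_left hlam.le hM hM7

lemma vol_ballPt (hd : 2 ≤ d) (z : Pt d) {r : ℝ} (hr : 0 ≤ r) :
    volume (ball z r) = ENNReal.ofReal (r^(d-1)) *
      volume (ball (0 : EuclideanSpace ℝ (Fin (d-1))) 1) * ENNReal.ofReal (2*r) := by
  have : ball z r = ball z.1 r ×ˢ ball z.2 r := by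
    rw [ball_prod_same]
  rw [this, Measure.volume_eq_prod, Measure.prod_prod, vol_ball' hd z.1 hr, Real.volume_ball]

lemma glue (hd : 2 ≤ d) (z : Pt d) {r lam : ℝ} (hr : 0 < r) {X : ℝ}
    (h1 : volume (ball z r ∩ {x : Pt d | Wb d x < lam}) ≤
      ENNReal.ofReal X * volume (ball (0 : EuclideanSpace ℝ (Fin (d-1))) 1))
    (h2 : X ≤ Kc d * Real.sqrt (lam / Mz z r) * (r^(d-1) * (2*r))) :
    volume (ball z r ∩ {x : Pt d | Wb d x < lam}) ≤
      ENNReal.ofReal (Kc d * Real.sqrt (lam / Mz z r)) * volume (ball z r) := by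
  have hK : 0 ≤ Kc d * Real.sqrt (lam / Mz z r) := by
    have := Kc_pos d hd
    positivity
  calc volume (ball z r ∩ {x : Pt d | Wb d x < lam})
      ≤ ENNReal.ofReal X * volume (ball (0 : EuclideanSpace ℝ (Fin (d-1))) 1) := h1
  _ ≤ ENNReal.ofReal (Kc d * Real.sqrt (lam / Mz z r) * (r^(d-1) * (2*r)))
      * volume (ball (0 : EuclideanSpace ℝ (Fin (d-1))) 1) := by
      exact mul_le_mul_left (ENNReal.ofReal_le_ofReal h2) _
  _ = ENNReal.ofReal (Kc d * Real.sqrt (lam / Mz z r)) * volume (ball z r) := by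
      rw [vol_ballPt hd z hr.le]
      rw [show Kc d * Real.sqrt (lam / Mz z r) * (r^(d-1) * (2*r))
        = (Kc d * Real.sqrt (lam / Mz z r)) * (r^(d-1)) * (2*r) by ring]
      rw [ENNReal.ofReal_mul (by positivity), ENNReal.ofReal_mul hK]
      ring

lemma pyth_decomp {E : Type*} [NormedAddCommGroup E] [InnerProductSpace ℝ E]
    (v w : E) (hv : ‖v‖ = 1) : ‖w‖^2 = ‖w - ⟪v, w⟫ • v‖^2 + ⟪v, w⟫^2 := by
  have horth : ⟪w - ⟪v, w⟫ • v, ⟪v, w⟫ • v⟫ = (0:ℝ) := by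
    have h1 : ⟪w - ⟪v, w⟫ • v, ⟪v, w⟫ • v⟫
        = ⟪v, w⟫ * (⟪w, v⟫ - ⟪v, w⟫ * ⟪v, v⟫) := by
      rw [real_inner_smul_right, inner_sub_left, real_inner_smul_left]
    rw [h1, real_inner_self_eq_norm_sq, hv, real_inner_comm]
    ring
  have hdecomp : w = (w - ⟪v, w⟫ • v) + ⟪v, w⟫ • v := by abel
  calc ‖w‖^2 = ‖(w - ⟪v, w⟫ • v) + ⟪v, w⟫ • v‖^2 := by rw [← hdecomp]
  _ = ‖w - ⟪v, w⟫ • v‖^2 + 2*⟪w - ⟪v, w⟫ • v, ⟪v, w⟫ • v⟫ + ‖⟪v, w⟫ • v‖^2 := by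
      rw [norm_add_sq_real]
  _ = ‖w - ⟪v, w⟫ • v‖^2 + ⟪v, w⟫^2 := by
      rw [horth, norm_smul, Real.norm_eq_abs, hv, mul_one, sq_abs]; ring

lemma derive_facts {lam r T M : ℝ} (hlam : 1 < lam) (hr : 0 < r) (hrT : r ≤ T)
    (h8 : 8*lam < M) (hub : M ≤ lam + 2*r + 4*r*T) :
    1 < T ∧ lam < r*T ∧ M ≤ 7*r*T := by
  have hT0 : 0 < T := lt_of_lt_of_le hr hrT
  have hT1 : 1 < T := by nlinarith
  have h2 : lam < r * T := by nlinarith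
  exact ⟨hT1, h2, by nlinarith⟩

theorem sublevel_bound (hd : 2 ≤ d) (z : Pt d) {r : ℝ} (hr : 0 < r) (lam : ℝ) :
    volume (ball z r ∩ {x : Pt d | Wb d x < lam}) ≤
      ENNReal.ofReal (Kc d * Real.sqrt (lam / Mz z r)) * volume (ball z r) := by
  haveI := ntE hd
  set A := ‖z.1‖ with hA_def
  set T := A + r with hT_def
  set M := Mz z r with hM_def
  have hApos : 0 ≤ A := norm_nonneg _
  have hTpos : 0 < T := by positivity
  have hM1 : 1 ≤ M := one_le_Mz z r
  have hMpos : 0 < M := Mz_pos z r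
  have hKpos := Kc_pos d hd
  have hKge := Kc_ge d hd
  -- trivial case: empty sublevel set
  by_cases hlam1 : lam ≤ 1
  · have hempty : ball z r ∩ {x : Pt d | Wb d x < lam} = ∅ := by
      rw [Set.eq_empty_iff_forall_notMem]
      rintro x ⟨-, hxw⟩
      have := one_le_Wb d x
      have : Wb d x < lam := hxw
      linarith
    rw [hempty, measure_empty]
    exact zero_le
  push_neg at hlam1
  have hlampos : 0 < lam := by linarith
  by_cases hMcase : M ≤ 8 * lam
  · -- M comparable to lam
    have hs : (1:ℝ) ≤ Kc d * Real.sqrt (lam / M) := by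
      have h8 : (1:ℝ)/9 ≤ lam / M := by
        rw [div_le_div_iff₀ (by norm_num) hMpos]
        linarith only [hMcase, hlampos]
      have : (1:ℝ)/3 ≤ Real.sqrt (lam / M) := by
        rw [show (1:ℝ)/3 = Real.sqrt ((1/3)^2) by rw [Real.sqrt_sq (by norm_num)]]
        apply Real.sqrt_le_sqrt
        calc ((1:ℝ)/3)^2 = 1/9 := by norm_num
        _ ≤ lam / M := h8
      nlinarith [Real.sqrt_nonneg (lam / M), hKge, this]
    calc volume (ball z r ∩ {x : Pt d | Wb d x < lam})
        ≤ volume (ball z r) := measure_mono Set.inter_subset_left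
    _ = 1 * volume (ball z r) := (one_mul _).symm
    _ ≤ ENNReal.ofReal (Kc d * Real.sqrt (lam / M)) * volume (ball z r) := by
        apply mul_le_mul_left
        rw [show (1:ℝ≥0∞) = ENNReal.ofReal 1 by simp]
        exact ENNReal.ofReal_le_ofReal hs
  push_neg at hMcase
  -- nonempty case: extract witness
  by_cases hS0 : ball z r ∩ {x : Pt d | Wb d x < lam} = ∅
  · rw [hS0, measure_empty]; exact zero_le
  obtain ⟨x0, hx0b, hx0w⟩ := Set.nonempty_iff_ne_empty.2 hS0
  obtain ⟨hρlo, hρhi, hx02⟩ := norm_fst_bounds hx0b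
  have hx0w' : Wb d x0 < lam := hx0w
  unfold Wb at hx0w'
  simp only [max_lt_iff] at hx0w'
  obtain ⟨-, hρ0lam, habs0⟩ := hx0w'
  set ρ0 := ‖x0.1‖ with hρ0_def
  have hρ0nn : 0 ≤ ρ0 := norm_nonneg _
  have hAlow : A - r ≤ ρ0 := le_trans (le_max_right _ _) hρlo
  have hAlam : A < lam + r := by linarith
  have hTlam : T < lam + 2*r := by rw [hT_def]; linarith
  have hzb : |z.2 + ρ0^2| < lam + r := by
    have h1 : |z.2 + ρ0^2| ≤ |z.2 - x0.2| + |x0.2 + ρ0^2| := by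
      calc |z.2 + ρ0^2| = |(z.2 - x0.2) + (x0.2 + ρ0^2)| := by congr 1; ring
      _ ≤ _ := abs_add_le _ _
    have h2 : |z.2 - x0.2| < r := by
      rw [abs_sub_comm]; exact hx02
    linarith
  set ρ1' := max 0 (A - r) with hρ1'_def
  have hρ1'nn : 0 ≤ ρ1' := le_max_left _ _
  have hρ1'le : ρ1' ≤ ρ0 := hρlo
  have hρ0T : ρ0 < T := hρhi
  have hTsq : T^2 - ρ1'^2 ≤ 4*r*T := by
    rcases le_total A r with h | h
    · have : ρ1' = 0 := max_eq_left (by linarith)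
      rw [this]
      have h2r : T ≤ 2*r := by rw [hT_def]; linarith only [h]
      nlinarith only [h2r, hr, hTpos]
    · have : ρ1' = A - r := max_eq_right (by linarith)
      rw [this, hT_def]
      nlinarith only [h, hr, hApos]
  have hMub : M ≤ lam + 2*r + 4*r*T := by
    rw [hM_def]
    unfold Mz
    have hb1 : (1:ℝ) ≤ lam + 2*r + 4*r*T := by
      nlinarith only [hlam1, hr, mul_pos hr hTpos]
    have hb2 : A + r ≤ lam + 2*r + 4*r*T := by
      have : A + r = T := by rw [hT_def]
      nlinarith only [this, hTlam, mul_pos hr hTpos]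
    have hρsq : ρ1'^2 ≤ ρ0^2 := pow_le_pow_left₀ hρ1'nn hρ1'le 2
    have hρsq2 : ρ0^2 ≤ T^2 := pow_le_pow_left₀ hρ0nn hρ0T.le 2
    have hb3 : |z.2 - r + ρ1'^2| ≤ lam + 2*r + 4*r*T := by
      have heq : z.2 - r + ρ1'^2 = (z.2 + ρ0^2) + (-r + ρ1'^2 - ρ0^2) := by ring
      have h1 : |z.2 - r + ρ1'^2| ≤ |z.2 + ρ0^2| + |(-r) + ρ1'^2 - ρ0^2| := by
        rw [heq]; exact abs_add_le _ _
      have h2 : |(-r) + ρ1'^2 - ρ0^2| = r + ρ0^2 - ρ1'^2 := by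
        rw [abs_of_nonpos (by linarith)]; ring
      rw [h2] at h1
      linarith only [h1, hzb, hTsq, hρsq, hρsq2]
    have hb4 : |z.2 + r + T^2| ≤ lam + 2*r + 4*r*T := by
      have heq : z.2 + r + T^2 = (z.2 + ρ0^2) + (r + T^2 - ρ0^2) := by ring
      have h1 : |z.2 + r + T^2| ≤ |z.2 + ρ0^2| + |r + T^2 - ρ0^2| := by
        rw [heq]; exact abs_add_le _ _
      have h2 : |r + T^2 - ρ0^2| = r + T^2 - ρ0^2 := by
        rw [abs_of_nonneg (by nlinarith only [hρsq2, hr])]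
      rw [h2] at h1
      linarith only [h1, hzb, hTsq, hρsq, hρsq2]
    exact max_le hb1 (max_le hb2 (max_le hb3 hb4))
  have hrT : r ≤ T := by rw [hT_def]; linarith only [hApos]
  obtain ⟨hT1, hlamrT, hM7⟩ := derive_facts hlam1 hr hrT hMcase hMub
  -- the slice bound
  have hslice := slice_bound z hr (lam := lam) (d := d)
  have hEm : MeasurableSet (Eproj z r lam) := (Eproj_open z r lam).measurableSet
  have hmn1 : min (2*r) (2*lam) ≤ 2*r := min_le_left _ _
  have hmn2 : min (2*r) (2*lam) ≤ 2*lam := min_le_right _ _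
  have hmn0 : 0 ≤ min (2*r) (2*lam) := le_min (by positivity) (by positivity)
  have hd1 : d - 1 = (d-2) + 1 := by omega
  by_cases hAr : A ≤ 2*r
  · -- annulus case
    have hT3 : T ≤ 3*r := by rw [hT_def]; linarith
    set u1 := -z.2 - (lam + r) with hu1_def
    set u2 := -z.2 + (lam + r) with hu2_def
    set ρ1 := Real.sqrt (max 0 u1) with hρ1_def
    set ρ2 := min (min lam T) (Real.sqrt (max 0 u2)) with hρ2_def
    have hρ1nn : 0 ≤ ρ1 := Real.sqrt_nonneg _
    have hcont : Eproj z r lam ⊆ closedBall (0 : EuclideanSpace ℝ (Fin (d-1))) ρ2 \ ball 0 ρ1 := by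
      rintro x' ⟨hxb, hxn, hxa⟩
      have hxr : ‖x'‖ < T := by
        rw [mem_ball, dist_eq_norm] at hxb
        calc ‖x'‖ = ‖z.1 + (x' - z.1)‖ := by congr 1; abel
        _ ≤ ‖z.1‖ + ‖x' - z.1‖ := norm_add_le _ _
        _ < A + r := by rw [hA_def]; linarith
      have habs' := abs_lt.1 hxa
      have hsq_u2 : ‖x'‖^2 ≤ max 0 u2 := by
        apply le_max_of_le_right
        rw [hu2_def]; linarith [habs'.1]
      constructor
      · rw [mem_closedBall, dist_zero_right]
        apply le_min (le_min hxn.le hxr.le)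
        calc ‖x'‖ = Real.sqrt (‖x'‖^2) := by rw [Real.sqrt_sq (norm_nonneg _)]
        _ ≤ Real.sqrt (max 0 u2) := Real.sqrt_le_sqrt hsq_u2
      · rw [mem_ball, dist_zero_right, not_lt, hρ1_def]
        have hsq_u1 : max 0 u1 ≤ ‖x'‖^2 := by
          apply max_le (sq_nonneg _)
          rw [hu1_def]; linarith [habs'.2]
        calc Real.sqrt (max 0 u1) ≤ Real.sqrt (‖x'‖^2) := Real.sqrt_le_sqrt hsq_u1
        _ = ‖x'‖ := Real.sqrt_sq (norm_nonneg _)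
    by_cases hρcmp : ρ1 ≤ ρ2
    · -- main annulus branch
      have hEvol : volume (Eproj z r lam) ≤
          ENNReal.ofReal ((d-1) * ρ2^(d-2) * (ρ2 - ρ1)) *
            volume (ball (0 : EuclideanSpace ℝ (Fin (d-1))) 1) := by
        calc volume (Eproj z r lam)
            ≤ volume (closedBall (0 : EuclideanSpace ℝ (Fin (d-1))) ρ2 \ ball 0 ρ1) :=
              measure_mono hcont
        _ ≤ ENNReal.ofReal (ρ2^(d-1) - ρ1^(d-1)) *
              volume (ball (0 : EuclideanSpace ℝ (Fin (d-1))) 1) := vol_annulus hd hρ1nn hρcmp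
        _ ≤ _ := by
            apply mul_le_mul_left
            apply ENNReal.ofReal_le_ofReal
            have := my_pow_diff_le (d-2) hρ1nn hρcmp
            rw [← hd1] at this
            have hcast : ((d-2:ℕ):ℝ) + 1 = ((d:ℝ) - 1) := by
              have : ((d-2:ℕ):ℝ) = (d:ℝ) - 2 := by
                have : (2:ℝ) ≤ (d:ℝ) := by exact_mod_cast hd
                push_cast [Nat.cast_sub hd]
                ring
              rw [this]; ring
            calc ρ2^(d-1) - ρ1^(d-1) ≤ ((d-2:ℕ)+1) * ρ2^(d-2) * (ρ2 - ρ1) := by linarith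
            _ = ((d:ℝ)-1) * ρ2^(d-2) * (ρ2 - ρ1) := by rw [← hcast]
      -- width bound
      have hu12 : max 0 u1 ≤ max 0 u2 := by
        apply max_le (le_max_left _ _)
        apply le_max_of_le_right
        rw [hu1_def, hu2_def]; linarith
      have hwidth : ρ2 - ρ1 ≤ Real.sqrt (2*(lam + r)) := by
        have h1 : ρ2 ≤ Real.sqrt (max 0 u2) := min_le_right _ _
        have h2 : Real.sqrt (max 0 u2) - Real.sqrt (max 0 u1) ≤
            Real.sqrt (max 0 u2 - max 0 u1) := my_sqrt_sub_le (le_max_left _ _) hu12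
        have h3 : max 0 u2 - max 0 u1 ≤ 2*(lam + r) := by
          have : u2 - u1 = 2*(lam+r) := by rw [hu1_def, hu2_def]; ring
          rcases le_total u1 0 with h | h
          · have e1 : max 0 u1 = 0 := max_eq_left h
            rw [e1, sub_zero]
            apply max_le (by positivity)
            rw [hu2_def]
            have hu1' : -z.2 - (lam + r) ≤ 0 := by rw [hu1_def] at h; exact h
            linarith only [hu1', hlampos, hr]
          · have e1 : max 0 u1 = u1 := max_eq_right h
            have e2 : max 0 u2 = u2 := max_eq_right (by linarith)
            rw [e1, e2]; linarith
        calc ρ2 - ρ1 ≤ Real.sqrt (max 0 u2) - Real.sqrt (max 0 u1) := by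
              rw [hρ1_def]; linarith
        _ ≤ Real.sqrt (max 0 u2 - max 0 u1) := h2
        _ ≤ Real.sqrt (2*(lam+r)) := Real.sqrt_le_sqrt h3
      have hw0 : 0 ≤ ρ2 - ρ1 := by linarith
      have hw2 : (ρ2 - ρ1)^2 ≤ 2*(lam + r) := by
        have hsq := Real.sq_sqrt (by positivity : (0:ℝ) ≤ 2*(lam+r))
        nlinarith only [hsq, hwidth, hw0, Real.sqrt_nonneg (2*(lam+r))]
      -- scalar inequality
      have hscal := scalar_claim hlam1 hr hT3 hrT hw0 hw2 hmn0 hmn1 hmn2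
      have hρ2r : ρ2 ≤ 3*r := by
        rcases le_total lam r with h | h
        · calc ρ2 ≤ min lam T := min_le_left _ _
          _ ≤ lam := min_le_left _ _
          _ ≤ 3*r := by linarith
        · calc ρ2 ≤ min lam T := min_le_left _ _
          _ ≤ T := min_le_right _ _
          _ ≤ 3*r := hT3
      have hρ2nn : 0 ≤ ρ2 := le_trans hρ1nn hρcmp
      have hKEY : ((d:ℝ)-1) * ρ2^(d-2) * (ρ2 - ρ1) * min (2*r) (2*lam) * Real.sqrt (7*r*T)
          ≤ (Kc d * (r^(d-1) * (2*r))) * Real.sqrt lam := by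
        have hdr : (0:ℝ) ≤ (d:ℝ)-1 := by
          have : (2:ℝ) ≤ (d:ℝ) := by exact_mod_cast hd
          linarith
        have hpow : ρ2^(d-2) ≤ (3*r)^(d-2) := pow_le_pow_left₀ hρ2nn hρ2r _
        calc ((d:ℝ)-1) * ρ2^(d-2) * (ρ2 - ρ1) * min (2*r) (2*lam) * Real.sqrt (7*r*T)
            = ((d:ℝ)-1) * ρ2^(d-2) * ((ρ2 - ρ1) * min (2*r) (2*lam) * Real.sqrt (7*r*T)) := by
              ring
        _ ≤ ((d:ℝ)-1) * (3*r)^(d-2) * (20 * Real.sqrt lam * r^2) := by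
              apply mul_le_mul
              · exact mul_le_mul_of_nonneg_left hpow hdr
              · exact hscal
              · positivity
              · positivity
        _ ≤ (Kc d * (r^(d-1) * (2*r))) * Real.sqrt lam := by
              rw [mul_pow]
              have hr1 : r^(d-1) = r^(d-2) * r := by
                rw [hd1]; ring
              rw [hr1]
              have hdd : ((d:ℝ)-1) * 3^(d-2) * 20 ≤ Kc d * 2 := by
                unfold Kc
                have h3 : (3:ℝ)^(d-2) ≤ 3^d := pow_le_pow_right₀ (by norm_num) (by omega)
                have h7 : (0:ℝ) ≤ 7^d := by positivity
                have hdle : ((d:ℝ)-1) ≤ (d:ℝ) := by linarith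
                have h3p : (0:ℝ) < 3^(d-2) := by positivity
                have h3p' : (0:ℝ) < 3^d := by positivity
                have hd2 : (2:ℝ) ≤ (d:ℝ) := by exact_mod_cast hd
                nlinarith only [mul_le_mul_of_nonneg_left h3 (by linarith only [hd2] : (0:ℝ) ≤ (d:ℝ)-1), h7, h3p', hd2]
              calc ((d:ℝ)-1) * (3^(d-2) * r^(d-2)) * (20 * Real.sqrt lam * r^2)
                  = (((d:ℝ)-1) * 3^(d-2) * 20) * (r^(d-2) * r^2 * Real.sqrt lam) := by ring
              _ ≤ (Kc d * 2) * (r^(d-2) * r^2 * Real.sqrt lam) := by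
                  apply mul_le_mul_of_nonneg_right hdd (by positivity)
              _ = (Kc d * (r^(d-2) * r * (2*r))) * Real.sqrt lam := by ring
      have hfinal : ((d:ℝ)-1) * ρ2^(d-2) * (ρ2 - ρ1) * min (2*r) (2*lam)
          ≤ (Kc d * (r^(d-1) * (2*r))) * Real.sqrt (lam / M) := by
        have hdr0 : (0:ℝ) ≤ (d:ℝ)-1 := by
          have : (2:ℝ) ≤ (d:ℝ) := by exact_mod_cast hd
          linarith
        apply sqrt_budget hlampos hMpos hM7 hr hTpos _ _ hKEY
        · exact mul_nonneg (mul_nonneg (mul_nonneg hdr0 (by positivity)) hw0) hmn0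
        · exact mul_nonneg hKpos.le (by positivity)
      have hY0 : (0:ℝ) ≤ ((d:ℝ)-1) * ρ2^(d-2) * (ρ2 - ρ1) := by
        have hdr0 : (0:ℝ) ≤ (d:ℝ)-1 := by
          have : (2:ℝ) ≤ (d:ℝ) := by exact_mod_cast hd
          linarith
        exact mul_nonneg (mul_nonneg hdr0 (by positivity)) hw0
      apply glue hd z hr (X := ((d:ℝ)-1) * ρ2^(d-2) * (ρ2 - ρ1) * min (2*r) (2*lam))
      · calc volume (ball z r ∩ {x : Pt d | Wb d x < lam})
            ≤ volume (Eproj z r lam) * ENNReal.ofReal (min (2*r) (2*lam)) := hslice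
        _ ≤ (ENNReal.ofReal ((d-1) * ρ2^(d-2) * (ρ2 - ρ1)) *
              volume (ball (0 : EuclideanSpace ℝ (Fin (d-1))) 1)) *
                ENNReal.ofReal (min (2*r) (2*lam)) := mul_le_mul_left hEvol _
        _ = ENNReal.ofReal (((d:ℝ)-1) * ρ2^(d-2) * (ρ2 - ρ1) * min (2*r) (2*lam)) *
              volume (ball (0 : EuclideanSpace ℝ (Fin (d-1))) 1) := by
            rw [ENNReal.ofReal_mul hY0]
            ring
      · calc ((d:ℝ)-1) * ρ2^(d-2) * (ρ2 - ρ1) * min (2*r) (2*lam)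
            ≤ (Kc d * (r^(d-1) * (2*r))) * Real.sqrt (lam / M) := hfinal
        _ = Kc d * Real.sqrt (lam / M) * (r^(d-1) * (2*r)) := by ring
    · -- empty annulus
      have hEempty : volume (Eproj z r lam) = 0 := by
        apply measure_mono_null hcont
        have : closedBall (0 : EuclideanSpace ℝ (Fin (d-1))) ρ2 \ ball 0 ρ1 = ∅ := by
          rw [Set.eq_empty_iff_forall_notMem]
          rintro x ⟨hx1, hx2⟩
          rw [mem_closedBall, dist_zero_right] at hx1
          rw [mem_ball, dist_zero_right, not_lt] at hx2
          push_neg at hρcmp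
          linarith
        rw [this, measure_empty]
      calc volume (ball z r ∩ {x : Pt d | Wb d x < lam})
          ≤ volume (Eproj z r lam) * ENNReal.ofReal (min (2*r) (2*lam)) := hslice
      _ = 0 := by rw [hEempty, zero_mul]
      _ ≤ _ := zero_le
  · -- slab case
    push_neg at hAr
    have hApos' : 0 < A := by linarith
    have hrlam : r < lam := by linarith
    have hmin_eq : min (2*r) (2*lam) = 2*r := min_eq_left (by linarith)
    set v := A⁻¹ • z.1 with hv_def
    have hv : ‖v‖ = 1 := by
      rw [hv_def, norm_smul, Real.norm_eq_abs, abs_inv, abs_of_pos hApos', ← hA_def]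
      field_simp
    set s2 := 2*(lam + r)/A with hs2_def
    have hs2pos : 0 < s2 := by positivity
    set ss := min (2*r) s2 with hss_def
    have hsspos : 0 < ss := lt_min (by positivity) hs2pos
    have hssle : ss ≤ 2*r := min_le_left _ _
    have hinner_z : ⟪v, z.1⟫ = A := by
      rw [hv_def, real_inner_smul_left, real_inner_self_eq_norm_sq, ← hA_def]
      field_simp
    have hinner_ball : ∀ x' ∈ Eproj z r lam, A - r < ⟪v, x'⟫ ∧ ⟪v, x'⟫ - A < r := by
      rintro x' ⟨hxb, -, -⟩
      rw [mem_ball, dist_eq_norm] at hxb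
      have h1 : |⟪v, x' - z.1⟫| ≤ ‖x' - z.1‖ := by
        calc |⟪v, x' - z.1⟫| ≤ ‖v‖ * ‖x' - z.1‖ := abs_real_inner_le_norm _ _
        _ = ‖x' - z.1‖ := by rw [hv, one_mul]
      have h2 : ⟪v, x' - z.1⟫ = ⟪v, x'⟫ - A := by
        rw [inner_sub_right, hinner_z]
      rw [h2] at h1
      have h3 := abs_le.1 h1
      constructor <;> linarith only [h3.1, h3.2, hxb]
    have hfib : ∀ x ∈ Eproj z r lam, ∀ y ∈ Eproj z r lam,
        x - ⟪v, x⟫ • v = y - ⟪v, y⟫ • v → ⟪v, x⟫ - ⟪v, y⟫ ≤ ss := by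
      intro x hx y hy hfe
      have hxb := hinner_ball x hx
      have hyb := hinner_ball y hy
      apply le_min
      · -- ≤ 2r
        linarith only [hxb.1, hxb.2, hyb.1, hyb.2]
      · -- ≤ s2
        have hpyth : ∀ w' ∈ Eproj z r lam, ‖w'‖^2 = ‖w' - ⟪v, w'⟫ • v‖^2 + ⟪v, w'⟫^2 :=
          fun w' _ => pyth_decomp v w' hv
        have hsq : ‖x‖^2 - ‖y‖^2 = ⟪v, x⟫^2 - ⟪v, y⟫^2 := by
          have e1 := hpyth x hx
          have e2 := hpyth y hy
          rw [hfe] at e1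
          linarith
        obtain ⟨-, -, hxa⟩ := hx
        obtain ⟨-, -, hya⟩ := hy
        have hxa' := abs_lt.1 hxa
        have hya' := abs_lt.1 hya
        have hdiff : |‖x‖^2 - ‖y‖^2| < 2*(lam + r) := by
          rw [abs_lt]; constructor <;> linarith only [hxa'.1, hxa'.2, hya'.1, hya'.2]
        have hsum : A ≤ ⟪v, x⟫ + ⟪v, y⟫ := by
          linarith only [hxb.1, hyb.1, hAr]
        rcases le_or_gt (⟪v, x⟫ - ⟪v, y⟫) 0 with h | h
        · linarith [hs2pos]
        · have habs2 : (⟪v, x⟫ - ⟪v, y⟫) * (⟪v, x⟫ + ⟪v, y⟫) < 2*(lam+r) := by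
            have : ⟪v, x⟫^2 - ⟪v, y⟫^2 = (⟪v, x⟫ - ⟪v, y⟫) * (⟪v, x⟫ + ⟪v, y⟫) := by ring
            rw [← this, ← hsq]
            calc ‖x‖^2 - ‖y‖^2 ≤ |‖x‖^2 - ‖y‖^2| := le_abs_self _
            _ < 2*(lam+r) := hdiff
          rw [hs2_def, le_div_iff₀ hApos']
          nlinarith only [habs2, hsum, h,
            mul_nonneg h.le (by linarith only [hsum] : (0:ℝ) ≤ ⟪v, x⟫ + ⟪v, y⟫ - A)]
    have hEb : Eproj z r lam ⊆ ball z.1 r := fun x' hx' => hx'.1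
    have hEvol := slab_bound hd v hv (Eproj z r lam) hEm hsspos hssle hr z.1 hEb hfib
    -- key scalar bound
    have hKEY : (7:ℝ)^(d-1) * r^(d-1) * (ss/r) * min (2*r) (2*lam) * Real.sqrt (7*r*T)
        ≤ (Kc d * (r^(d-1) * (2*r))) * Real.sqrt lam := by
      rw [hmin_eq]
      have hssr : (ss/r) * (2*r) = 2*ss := by field_simp
      have hgoal : (7:ℝ)^(d-1) * (2*ss) * Real.sqrt (7*r*T) ≤ (Kc d * (2*r)) * Real.sqrt lam := by
        have hss_budget : ss * Real.sqrt (7*r*T) ≤ 16 * Real.sqrt lam * r := by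
          have h7rT : (0:ℝ) ≤ 7*r*T := by positivity
          apply (pow_le_pow_iff_left₀ (by positivity) (by positivity) (two_ne_zero)).1
          have e1 : (ss * Real.sqrt (7*r*T))^2 = ss^2 * (7*r*T) := by
            rw [mul_pow, Real.sq_sqrt h7rT]
          have e2 : (16 * Real.sqrt lam * r)^2 = 256 * lam * r^2 := by
            rw [mul_pow, mul_pow, Real.sq_sqrt hlampos.le]; ring
          rw [e1, e2]
          rcases le_total (2*r) s2 with hcase | hcase
          · -- ss = 2r; derive r*T ≤ 3*lam
            have hss_eq : ss = 2*r := min_eq_left hcase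
            have hrA : r * A ≤ lam + r := by
              rw [hs2_def] at hcase
              have := (le_div_iff₀ hApos').1 hcase
              linarith
            have hr2 : r^2 ≤ r*A/2 := by
              nlinarith only [mul_le_mul_of_nonneg_left hAr.le hr.le]
            have hrT3 : r*T ≤ 3*lam := by
              rw [hT_def]
              nlinarith only [hrA, hr2, hrlam, mul_pos hr hApos']
            rw [hss_eq]
            have hmul : 28*r^2*(r*T) ≤ 28*r^2*(3*lam) := by
              apply mul_le_mul_of_nonneg_left hrT3 (by positivity)
            nlinarith only [hmul, sq_nonneg r, hr, hlampos]
          · -- ss = s2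
            have hss_eq : ss = s2 := min_eq_right hcase
            have hA23 : 2*T ≤ 3*A := by
              rw [hT_def]; linarith only [hAr]
            have hs2T : s2 ≤ 3*(lam+r)/T := by
              rw [hs2_def, div_le_div_iff₀ hApos' hTpos]
              nlinarith only [mul_le_mul_of_nonneg_left hA23
                (by positivity : (0:ℝ) ≤ lam + r)]
            have hs2sq : s2^2 ≤ 9*(lam+r)^2/T^2 := by
              have h1 : 0 ≤ s2 := hs2pos.le
              have h2 : 0 ≤ 3*(lam+r)/T := by positivity
              calc s2^2 ≤ (3*(lam+r)/T)^2 := pow_le_pow_left₀ h1 hs2T 2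
              _ = 9*(lam+r)^2/T^2 := by rw [div_pow]; ring_nf
            rw [hss_eq]
            have hT2pos : (0:ℝ) < T^2 := by positivity
            have key2 : s2^2 * (7*r*T) ≤ 63 * (lam+r)^2 * r / T := by
              calc s2^2 * (7*r*T) ≤ (9*(lam+r)^2/T^2) * (7*r*T) := by
                    apply mul_le_mul_of_nonneg_right hs2sq (by positivity)
              _ = 63 * (lam+r)^2 * r / T := by field_simp; ring
            calc s2^2 * (7*r*T) ≤ 63 * (lam+r)^2 * r / T := key2
            _ ≤ 256 * lam * r^2 := by
                rw [div_le_iff₀ hTpos]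
                have hlr : (lam + r)^2 ≤ 4*lam^2 := by nlinarith only [hrlam, hr]
                have h1 : lam * lam ≤ lam * (r*T) :=
                  mul_le_mul_of_nonneg_left hlamrT.le hlampos.le
                have h2 : 63 * (lam*lam) * r ≤ 63 * (lam * (r*T)) * r := by
                  nlinarith only [mul_le_mul_of_nonneg_right h1 hr.le]
                have h3 : 63 * (lam+r)^2 * r ≤ 63 * (4*lam^2) * r := by
                  nlinarith only [mul_le_mul_of_nonneg_right hlr hr.le]
                nlinarith only [h2, h3, hlampos, hr, mul_pos hlampos hr,
                  mul_pos (mul_pos hlampos hr) hTpos]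
        have h7n : (0:ℝ) < 7^(d-1) := by positivity
        have hKc7 : (7:ℝ)^(d-1) * 32 ≤ Kc d * 2 := by
          unfold Kc
          have h71 : (7:ℝ)^(d-1) ≤ 7^d := pow_le_pow_right₀ (by norm_num) (by omega)
          have h30 : (0:ℝ) ≤ 10 * d * 3^d := by positivity
          nlinarith only [h71, h30, pow_pos (by norm_num : (0:ℝ) < 7) d]
        calc (7:ℝ)^(d-1) * (2*ss) * Real.sqrt (7*r*T)
            = 2 * (7:ℝ)^(d-1) * (ss * Real.sqrt (7*r*T)) := by ring
        _ ≤ 2 * (7:ℝ)^(d-1) * (16 * Real.sqrt lam * r) := by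
            apply mul_le_mul_of_nonneg_left hss_budget (by positivity)
        _ = ((7:ℝ)^(d-1) * 32) * (Real.sqrt lam * r) := by ring
        _ ≤ (Kc d * 2) * (Real.sqrt lam * r) := by
            apply mul_le_mul_of_nonneg_right hKc7 (by positivity)
        _ = (Kc d * (2*r)) * Real.sqrt lam := by ring
      calc (7:ℝ)^(d-1) * r^(d-1) * (ss/r) * (2*r) * Real.sqrt (7*r*T)
          = r^(d-1) * ((7:ℝ)^(d-1) * ((ss/r) * (2*r)) * Real.sqrt (7*r*T)) := by ring
      _ = r^(d-1) * ((7:ℝ)^(d-1) * (2*ss) * Real.sqrt (7*r*T)) := by rw [hssr]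
      _ ≤ r^(d-1) * ((Kc d * (2*r)) * Real.sqrt lam) := by
          apply mul_le_mul_of_nonneg_left hgoal (by positivity)
      _ = (Kc d * (r^(d-1) * (2*r))) * Real.sqrt lam := by ring
    have hfinal : (7:ℝ)^(d-1) * r^(d-1) * (ss/r) * min (2*r) (2*lam)
        ≤ (Kc d * (r^(d-1) * (2*r))) * Real.sqrt (lam / M) := by
      apply sqrt_budget hlampos hMpos hM7 hr hTpos _ _ hKEY
      · exact mul_nonneg (mul_nonneg (by positivity) (by positivity : (0:ℝ) ≤ ss/r)) hmn0
      · exact mul_nonneg hKpos.le (by positivity)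
    apply glue hd z hr (X := (7:ℝ)^(d-1) * r^(d-1) * (ss/r) * min (2*r) (2*lam))
    · calc volume (ball z r ∩ {x : Pt d | Wb d x < lam})
          ≤ volume (Eproj z r lam) * ENNReal.ofReal (min (2*r) (2*lam)) := hslice
      _ ≤ (ENNReal.ofReal (7^(d-1) * r^(d-1) * (ss/r)) *
            volume (ball (0 : EuclideanSpace ℝ (Fin (d-1))) 1)) *
              ENNReal.ofReal (min (2*r) (2*lam)) := mul_le_mul_left hEvol _
      _ = ENNReal.ofReal ((7:ℝ)^(d-1) * r^(d-1) * (ss/r) * min (2*r) (2*lam)) *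
            volume (ball (0 : EuclideanSpace ℝ (Fin (d-1))) 1) := by
          rw [ENNReal.ofReal_mul
            (show (0:ℝ) ≤ (7:ℝ)^(d-1) * r^(d-1) * (ss/r) by positivity)]
          ring
    · calc (7:ℝ)^(d-1) * r^(d-1) * (ss/r) * min (2*r) (2*lam)
          ≤ (Kc d * (r^(d-1) * (2*r))) * Real.sqrt (lam / M) := hfinal
      _ = Kc d * Real.sqrt (lam / M) * (r^(d-1) * (2*r)) := by ring

section Avg

variable {d : ℕ}

lemma volB_ne_zero (hd : 2 ≤ d) (z : Pt d) {r : ℝ} (hr : 0 < r) :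
    volume (ball z r) ≠ 0 ∧ volume (ball z r) ≠ ⊤ := by
  haveI := ntE hd
  rw [vol_ballPt hd z hr.le]
  have hω0 : volume (ball (0 : EuclideanSpace ℝ (Fin (d-1))) 1) ≠ 0 :=
    (Metric.measure_ball_pos volume 0 one_pos).ne'
  have hωt : volume (ball (0 : EuclideanSpace ℝ (Fin (d-1))) 1) ≠ ⊤ :=
    measure_ball_lt_top.ne
  constructor
  · apply mul_ne_zero (mul_ne_zero ?_ hω0) ?_
    · simp only [ne_eq, ENNReal.ofReal_eq_zero, not_le]
      positivity
    · simp only [ne_eq, ENNReal.ofReal_eq_zero, not_le]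
      positivity
  · exact ENNReal.mul_ne_top (ENNReal.mul_ne_top ENNReal.ofReal_ne_top hωt)
      ENNReal.ofReal_ne_top

lemma volBR_pos (hd : 2 ≤ d) (z : Pt d) {r : ℝ} (hr : 0 < r) :
    0 < (volume (ball z r)).toReal := by
  obtain ⟨h0, ht⟩ := volB_ne_zero hd z hr
  exact ENNReal.toReal_pos h0 ht

lemma Wb_rpow_integrableOn (hd : 2 ≤ d) (z : Pt d) {r : ℝ} (hr : 0 < r) (c : ℝ) {K : ℝ}
    (hK : ∀ x ∈ ball z r, (Wb d x) ^ c ≤ K) :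
    IntegrableOn (fun x => (Wb d x) ^ c) (ball z r) volume := by
  obtain ⟨-, ht⟩ := volB_ne_zero hd z hr
  apply Measure.integrableOn_of_bounded ht
    ((Wb_rpow_cont d c).aestronglyMeasurable) (M := K)
  rw [ae_restrict_iff' measurableSet_ball]
  apply ae_of_all
  intro x hx
  rw [Real.norm_eq_abs, abs_of_nonneg (Real.rpow_nonneg (Wb_pos d x).le c)]
  exact hK x hx

/-- average is at most the sup bound, for nonnegative exponents -/
lemma avg_le_sup (hd : 2 ≤ d) (z : Pt d) {r : ℝ} (hr : 0 < r) {s : ℝ} (hs : 0 ≤ s) :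
    ⨍ x in ball z r, (Wb d x) ^ s ≤ (Mz z r) ^ s := by
  have hbd : ∀ x ∈ ball z r, (Wb d x) ^ s ≤ (Mz z r) ^ s := fun x hx =>
    Real.rpow_le_rpow (Wb_pos d x).le (Wb_le_Mz hx) hs
  have hint := Wb_rpow_integrableOn hd z hr s hbd
  have hintc : IntegrableOn (fun _ : Pt d => (Mz z r) ^ s) (ball z r) volume :=
    integrableOn_const measure_ball_lt_top.ne
  rw [setAverage_eq]
  have h1 : ∫ x in ball z r, (Wb d x) ^ s ≤
      ∫ _ in ball z r, (Mz z r) ^ s :=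
    setIntegral_mono_on hint hintc measurableSet_ball hbd
  rw [setIntegral_const] at h1
  have hv := volBR_pos hd z hr
  rw [smul_eq_mul]
  calc (volume (ball z r)).toReal⁻¹ * ∫ x in ball z r, (Wb d x) ^ s
      ≤ (volume (ball z r)).toReal⁻¹ * ((volume (ball z r)).toReal * (Mz z r) ^ s) := by
        apply mul_le_mul_of_nonneg_left ?_ (by positivity)
        simpa [measureReal_def] using h1
  _ = (Mz z r) ^ s := by field_simp

lemma avg_nonneg {f : Pt d → ℝ} (hf : ∀ x, 0 ≤ f x) (z : Pt d) (r : ℝ) :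
    0 ≤ ⨍ x in ball z r, f x := by
  rw [setAverage_eq, smul_eq_mul]
  apply mul_nonneg (by positivity)
  exact integral_nonneg hf

end Avg

section L1

variable {d : ℕ}

/-- main averaging estimate for small negative powers -/
lemma avg_neg_pow (hd : 2 ≤ d) (z : Pt d) {r : ℝ} (hr : 0 < r) {q : ℝ}
    (hq0 : 0 ≤ q) (hq : q ≤ 1/4) :
    ⨍ x in ball z r, (Wb d x) ^ (-q) ≤ 12 * Kc d * (Mz z r) ^ (-q) := by
  haveI := ntE hd
  set M := Mz z r with hM_def
  have hM1 : 1 ≤ M := one_le_Mz z r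
  have hMpos : 0 < M := Mz_pos z r
  have hKpos := Kc_pos d hd
  set B := ball z r with hB_def
  set f : Pt d → ℝ := fun x => (Wb d x) ^ (-q) with hf_def
  have hf1 : ∀ x, f x ≤ 1 := fun x =>
    Real.rpow_le_one_of_one_le_of_nonpos (one_le_Wb d x) (by linarith)
  have hf0 : ∀ x, 0 ≤ f x := fun x => Real.rpow_nonneg (Wb_pos d x).le _
  have hfint : IntegrableOn f B volume :=
    Wb_rpow_integrableOn hd z hr (-q) (fun x _ => hf1 x)
  -- dyadic exponent
  obtain ⟨k1, hk1⟩ := pow_unbounded_of_one_lt M (by norm_num : (1:ℝ) < 2)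
  have hex : ∃ k : ℕ, M < 2^(k+1) := ⟨k1, lt_of_lt_of_le hk1 (by
    apply pow_le_pow_right₀ (by norm_num) (Nat.le_succ _))⟩
  set k0 := Nat.find hex with hk0_def
  have hk0 : M < 2^(k0+1) := Nat.find_spec hex
  have h2k0 : (2:ℝ)^(k0+1) ≤ 2*M := by
    rcases Nat.eq_zero_or_pos k0 with h | h
    · rw [h]; norm_num; linarith
    · have hmin := Nat.find_min hex (m := k0 - 1) (by omega)
      push_neg at hmin
      have : (2:ℝ)^(k0-1+1) ≤ M := hmin
      have he : k0 - 1 + 1 = k0 := by omega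
      rw [he] at this
      calc (2:ℝ)^(k0+1) = 2 * 2^k0 := by ring
      _ ≤ 2 * M := by linarith
  -- the dyadic pieces
  set Bk : ℕ → Set (Pt d) := fun k => B ∩ {x | 2^k ≤ Wb d x ∧ Wb d x < 2^(k+1)} with hBk_def
  have hBkm : ∀ k, MeasurableSet (Bk k) := by
    intro k
    apply MeasurableSet.inter measurableSet_ball
    have : {x : Pt d | 2^k ≤ Wb d x ∧ Wb d x < 2^(k+1)} =
        (Wb d) ⁻¹' (Set.Ico (2^k) (2^(k+1))) := rfl
    rw [this]
    exact (Wb_cont d).measurable measurableSet_Ico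
  have hcover : B = ⋃ k ∈ Finset.range (k0+1), Bk k := by
    apply Set.Subset.antisymm
    · intro x hx
      have h1 : 1 ≤ Wb d x := one_le_Wb d x
      have h2 : Wb d x < 2^(k0+1) := lt_of_le_of_lt (Wb_le_Mz hx) hk0
      obtain ⟨k, hk, hka, hkb⟩ := my_dyadic k0 h1 h2
      apply Set.mem_biUnion (Finset.mem_range.2 (Nat.lt_succ_of_le hk))
      exact ⟨hx, hka, hkb⟩
    · apply Set.iUnion₂_subset
      intro k _
      exact Set.inter_subset_left
  have hdisj : (↑(Finset.range (k0+1)) : Set ℕ).Pairwise (Function.onFun Disjoint Bk) := by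
    intro i _ j _ hij
    rw [Function.onFun, Set.disjoint_left]
    rintro x ⟨-, hxi1, hxi2⟩ ⟨-, hxj1, hxj2⟩
    rcases Nat.lt_or_ge i j with h | h
    · have : (2:ℝ)^(i+1) ≤ 2^j := pow_le_pow_right₀ (by norm_num) (by omega)
      linarith
    · have hji : j < i := lt_of_le_of_ne h (Ne.symm hij)
      have : (2:ℝ)^(j+1) ≤ 2^i := pow_le_pow_right₀ (by norm_num) (by omega)
      linarith
  have hsplit : ∫ x in B, f x = ∑ k ∈ Finset.range (k0+1), ∫ x in Bk k, f x := by
    conv_lhs => rw [hcover]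
    exact integral_biUnion_finset _ (fun k _ => hBkm k) hdisj
      (fun k _ => hfint.mono_set Set.inter_subset_left)
  -- per-piece bound
  have hpiece : ∀ k, ∫ x in Bk k, f x ≤
      ((2:ℝ)^k)^(-q) * Kc d * (Real.sqrt ((2:ℝ)^(k+1)) / Real.sqrt M) *
        (volume B).toReal := by
    intro k
    have hpk : (0:ℝ) < 2^k := by positivity
    have hb1 : ∀ x ∈ Bk k, f x ≤ ((2:ℝ)^k)^(-q) := by
      rintro x ⟨-, hx1, -⟩
      exact Real.rpow_le_rpow_of_nonpos hpk hx1 (by linarith)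
    have hstep1 : ∫ x in Bk k, f x ≤ ((2:ℝ)^k)^(-q) * (volume (Bk k)).toReal := by
      have hintc : IntegrableOn (fun _ : Pt d => ((2:ℝ)^k)^(-q)) (Bk k) volume := by
        apply integrableOn_const (ne_of_lt ?_)
        exact lt_of_le_of_lt (measure_mono Set.inter_subset_left) measure_ball_lt_top
      have := setIntegral_mono_on (hfint.mono_set Set.inter_subset_left) hintc (hBkm k) hb1
      rw [setIntegral_const, smul_eq_mul, measureReal_def] at this
      linarith
    have hmeas : (volume (Bk k)).toReal ≤
        Kc d * (Real.sqrt ((2:ℝ)^(k+1)) / Real.sqrt M) * (volume B).toReal := by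
      have hsub : Bk k ⊆ B ∩ {x : Pt d | Wb d x < 2^(k+1)} := by
        rintro x ⟨hx1, -, hx3⟩
        exact ⟨hx1, hx3⟩
      have hvol := sublevel_bound hd z hr ((2:ℝ)^(k+1))
      have hchain : volume (Bk k) ≤
          ENNReal.ofReal (Kc d * Real.sqrt ((2:ℝ)^(k+1) / M)) * volume B :=
        le_trans (measure_mono hsub) hvol
      have hBt : volume B ≠ ⊤ := (volB_ne_zero hd z hr).2
      have hRt : ENNReal.ofReal (Kc d * Real.sqrt ((2:ℝ)^(k+1) / M)) * volume B ≠ ⊤ :=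
        ENNReal.mul_ne_top ENNReal.ofReal_ne_top hBt
      have := (ENNReal.toReal_le_toReal (ne_top_of_le_ne_top hRt hchain) hRt).2 hchain
      rw [ENNReal.toReal_mul, ENNReal.toReal_ofReal (by positivity)] at this
      rw [Real.sqrt_div (by positivity : (0:ℝ) ≤ (2:ℝ)^(k+1))] at this
      linarith
    calc ∫ x in Bk k, f x ≤ ((2:ℝ)^k)^(-q) * (volume (Bk k)).toReal := hstep1
    _ ≤ ((2:ℝ)^k)^(-q) *
        (Kc d * (Real.sqrt ((2:ℝ)^(k+1)) / Real.sqrt M) * (volume B).toReal) := by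
        apply mul_le_mul_of_nonneg_left hmeas (by positivity)
    _ = ((2:ℝ)^k)^(-q) * Kc d * (Real.sqrt ((2:ℝ)^(k+1)) / Real.sqrt M) *
        (volume B).toReal := by ring
  -- rpow algebra: the geometric term
  set x : ℝ := (2:ℝ) ^ ((1:ℝ)/2 - q) with hx_def
  have hx_ge : (7:ℝ)/6 ≤ x := by
    have h1 : (2:ℝ)^((1:ℝ)/4) ≤ x := by
      apply Real.rpow_le_rpow_of_exponent_le (by norm_num)
      linarith
    have h2 : ((7:ℝ)/6) ≤ (2:ℝ)^((1:ℝ)/4) := by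
      have h3 : ((7:ℝ)/6)^(4:ℕ) ≤ 2 := by norm_num
      have h4 : ((7:ℝ)/6) = (((7:ℝ)/6)^(4:ℕ))^((1:ℝ)/4) := by
        rw [← Real.rpow_natCast ((7:ℝ)/6) 4, ← Real.rpow_mul (by norm_num)]
        norm_num
      rw [h4]
      exact Real.rpow_le_rpow (by positivity) h3 (by norm_num)
    linarith
  have hx1 : 1 < x := by linarith
  have hterm : ∀ k : ℕ, ((2:ℝ)^k)^(-q) * Real.sqrt ((2:ℝ)^(k+1)) = Real.sqrt 2 * x^k := by
    intro k
    have h2 : (0:ℝ) < 2 := by norm_num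
    have l1 : ((2:ℝ)^k)^(-q) = (2:ℝ) ^ ((k:ℝ)*(-q)) := by
      rw [← Real.rpow_natCast 2 k, ← Real.rpow_mul h2.le]
    have l2 : Real.sqrt ((2:ℝ)^(k+1)) = (2:ℝ) ^ ((((k+1):ℕ):ℝ)*((1:ℝ)/2)) := by
      rw [← Real.rpow_natCast 2 (k+1), Real.sqrt_eq_rpow, ← Real.rpow_mul h2.le]
    have l3 : Real.sqrt 2 = (2:ℝ) ^ ((1:ℝ)/2) := Real.sqrt_eq_rpow 2
    have l4 : x ^ k = (2:ℝ) ^ (((1:ℝ)/2 - q)*(k:ℝ)) := by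
      rw [hx_def, ← Real.rpow_natCast ((2:ℝ) ^ ((1:ℝ)/2 - q)) k, ← Real.rpow_mul h2.le]
    rw [l1, l2, l3, l4, ← Real.rpow_add h2, ← Real.rpow_add h2]
    congr 1
    push_cast
    ring
  have hgeom : ∑ k ∈ Finset.range (k0+1), x^k ≤ 6 * x^(k0+1) := by
    have h1 := my_geom_bound hx1 (k0+1)
    have h2 : x^(k0+1) / (x-1) ≤ 6 * x^(k0+1) := by
      rw [div_le_iff₀ (by linarith)]
      have hxp : (0:ℝ) < x^(k0+1) := by positivity
      nlinarith
    linarith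
  have hxk0 : x^(k0+1) ≤ Real.sqrt 2 * Real.sqrt M * M^(-q) := by
    have he1 : x^(k0+1) = ((2:ℝ)^(k0+1))^((1:ℝ)/2) * ((2:ℝ)^(k0+1))^(-q) := by
      rw [hx_def, ← Real.rpow_natCast ((2:ℝ) ^ ((1:ℝ)/2 - q)) (k0+1)]
      rw [← Real.rpow_mul (by norm_num : (0:ℝ) ≤ 2)]
      rw [← Real.rpow_natCast 2 (k0+1)]
      rw [← Real.rpow_mul (by norm_num : (0:ℝ) ≤ 2), ← Real.rpow_mul (by norm_num : (0:ℝ) ≤ 2)]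
      rw [← Real.rpow_add (by norm_num : (0:ℝ) < 2)]
      congr 1
      ring
    have he2 : ((2:ℝ)^(k0+1))^((1:ℝ)/2) ≤ Real.sqrt 2 * Real.sqrt M := by
      have : ((2:ℝ)^(k0+1))^((1:ℝ)/2) ≤ (2*M)^((1:ℝ)/2) :=
        Real.rpow_le_rpow (by positivity) h2k0 (by norm_num)
      calc ((2:ℝ)^(k0+1))^((1:ℝ)/2) ≤ (2*M)^((1:ℝ)/2) := this
      _ = Real.sqrt (2*M) := by rw [Real.sqrt_eq_rpow]
      _ = Real.sqrt 2 * Real.sqrt M := Real.sqrt_mul (by norm_num) M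
    have he3 : ((2:ℝ)^(k0+1))^(-q) ≤ M^(-q) :=
      Real.rpow_le_rpow_of_nonpos hMpos hk0.le (by linarith)
    rw [he1]
    apply mul_le_mul he2 he3 (by positivity) (by positivity)
  -- put it together
  have hsum : ∫ x in B, f x ≤ 12 * Kc d * M^(-q) * (volume B).toReal := by
    rw [hsplit]
    have h1 : ∑ k ∈ Finset.range (k0+1), ∫ x in Bk k, f x ≤
        ∑ k ∈ Finset.range (k0+1),
          ((2:ℝ)^k)^(-q) * Kc d * (Real.sqrt ((2:ℝ)^(k+1)) / Real.sqrt M) *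
            (volume B).toReal :=
      Finset.sum_le_sum (fun k _ => hpiece k)
    have h2 : ∀ k : ℕ, ((2:ℝ)^k)^(-q) * Kc d * (Real.sqrt ((2:ℝ)^(k+1)) / Real.sqrt M) *
        (volume B).toReal
        = (Kc d / Real.sqrt M * (volume B).toReal * Real.sqrt 2) * x^k := by
      intro k
      calc ((2:ℝ)^k)^(-q) * Kc d * (Real.sqrt ((2:ℝ)^(k+1)) / Real.sqrt M) *
          (volume B).toReal
          = Kc d * (volume B).toReal / Real.sqrt M *
              (((2:ℝ)^k)^(-q) * Real.sqrt ((2:ℝ)^(k+1))) := by ring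
      _ = Kc d * (volume B).toReal / Real.sqrt M * (Real.sqrt 2 * x^k) := by rw [hterm k]
      _ = (Kc d / Real.sqrt M * (volume B).toReal * Real.sqrt 2) * x^k := by ring
    rw [Finset.sum_congr rfl (fun k _ => h2 k), ← Finset.mul_sum] at h1
    have hsM : 0 < Real.sqrt M := Real.sqrt_pos.2 hMpos
    have hvB : 0 ≤ (volume B).toReal := ENNReal.toReal_nonneg
    have h3 : (Kc d / Real.sqrt M * (volume B).toReal * Real.sqrt 2) *
        (∑ k ∈ Finset.range (k0+1), x^k) ≤
        (Kc d / Real.sqrt M * (volume B).toReal * Real.sqrt 2) *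
          (6 * (Real.sqrt 2 * Real.sqrt M * M^(-q))) := by
      apply mul_le_mul_of_nonneg_left ?_ (by positivity)
      calc ∑ k ∈ Finset.range (k0+1), x^k ≤ 6 * x^(k0+1) := hgeom
      _ ≤ 6 * (Real.sqrt 2 * Real.sqrt M * M^(-q)) := by
          apply mul_le_mul_of_nonneg_left hxk0 (by norm_num)
    have h4 : (Kc d / Real.sqrt M * (volume B).toReal * Real.sqrt 2) *
        (6 * (Real.sqrt 2 * Real.sqrt M * M^(-q)))
        = 12 * Kc d * M^(-q) * (volume B).toReal := by
      have hs2 : Real.sqrt 2 * Real.sqrt 2 = 2 :=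
        Real.mul_self_sqrt (by norm_num : (0:ℝ) ≤ 2)
      have hsMne : Real.sqrt M ≠ 0 := ne_of_gt hsM
      calc (Kc d / Real.sqrt M * (volume B).toReal * Real.sqrt 2) *
          (6 * (Real.sqrt 2 * Real.sqrt M * M^(-q)))
          = 6 * Kc d * (Real.sqrt 2 * Real.sqrt 2) * (Real.sqrt M / Real.sqrt M) *
              M^(-q) * (volume B).toReal := by ring
      _ = 12 * Kc d * M^(-q) * (volume B).toReal := by
          rw [hs2, div_self hsMne]; ring
    calc ∑ k ∈ Finset.range (k0+1), ∫ x in Bk k, f x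
        ≤ (Kc d / Real.sqrt M * (volume B).toReal * Real.sqrt 2) *
          (∑ k ∈ Finset.range (k0+1), x^k) := h1
    _ ≤ _ := h3
    _ = _ := h4
  rw [setAverage_eq, smul_eq_mul]
  have hv := volBR_pos hd z hr
  calc (volume B).toReal⁻¹ * ∫ x in B, f x
      ≤ (volume B).toReal⁻¹ * (12 * Kc d * M^(-q) * (volume B).toReal) := by
        apply mul_le_mul_of_nonneg_left hsum (by positivity)
  _ = 12 * Kc d * M^(-q) := by
      have hv' : (volume B).toReal ≠ 0 := ne_of_gt hv
      field_simp

end L1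

/-- Let `d ≥ 2` and `P > 1`. There is `δ > 0` such that `w^t ∈ A_p(ℝ^d)` for all
`|t| ≤ δ` and all `p ∈ [P, ∞)`. -/
theorem wW_rpow_memAp (d : ℕ) (hd : 2 ≤ d) (P : ℝ) (hP : 1 < P) :
    ∃ δ : ℝ, 0 < δ ∧ ∀ t p : ℝ, |t| ≤ δ → P ≤ p →
      MemAp (d := d) p (fun x => (wW d x) ^ t) := by
  have hd0 : (0:ℝ) < d := by
    have : (2:ℝ) ≤ (d:ℝ) := by exact_mod_cast hd
    linarith
  refine ⟨min ((1:ℝ)/(4*(d:ℝ))) (((P-1)/(4*(d:ℝ)))), lt_min (by positivity) (div_pos (by linarith) (by positivity)), ?_⟩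
  intro t p ht hp
  have hp1 : 1 < p := lt_of_lt_of_le hP hp
  have hp0 : 0 < p - 1 := by linarith
  have hP0 : 0 < P - 1 := by linarith
  set a : ℝ := (d:ℝ) * t with ha_def
  have habs := abs_le.1 ht
  have ht1 : t ≤ min ((1:ℝ)/(4*(d:ℝ))) (((P-1)/(4*(d:ℝ)))) := habs.2
  have ht2 : -(min ((1:ℝ)/(4*(d:ℝ))) (((P-1)/(4*(d:ℝ))))) ≤ t := habs.1
  have hfe : (fun x : Pt d => (wW d x)^t) = (fun x => (Wb d x)^a) :=
    funext (fun x => wW_rpow d x t)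
  constructor
  · rw [hfe]
    exact (Wb_rpow_cont d a).locallyIntegrable
  · have hKC : (0:ℝ) < 12 * Kc d := by
      have := Kc_pos d hd
      linarith
    refine ⟨(12 * Kc d)^(p-1) + 12 * Kc d, ?_⟩
    intro z r hr
    set M := Mz z r with hM_def
    have hMpos : 0 < M := Mz_pos z r
    have hfe2 : (fun x : Pt d => ((Wb d x)^a) ^ (-(1/(p-1))))
        = (fun x => (Wb d x)^(-(a/(p-1)))) := by
      funext x
      rw [← Real.rpow_mul (Wb_pos d x).le]
      congr 1
      ring
    have key : apRatio p (fun x => (wW d x)^t) z r =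
        (⨍ x in ball z r, (Wb d x)^a) *
          (⨍ x in ball z r, (Wb d x)^(-(a/(p-1))))^(p-1) := by
      unfold apRatio
      rw [hfe]
      congr 2
      rw [← hfe2]
    rw [key]
    have havg1_nonneg : 0 ≤ ⨍ x in ball z r, (Wb d x)^a :=
      avg_nonneg (fun x => Real.rpow_nonneg (Wb_pos d x).le _) z r
    have havg2_nonneg : 0 ≤ ⨍ x in ball z r, (Wb d x)^(-(a/(p-1))) :=
      avg_nonneg (fun x => Real.rpow_nonneg (Wb_pos d x).le _) z r
    have hMexp : ∀ b : ℝ, (M^(-(b/(p-1))))^(p-1) = M^(-b) := by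
      intro b
      rw [← Real.rpow_mul hMpos.le]
      congr 1
      field_simp
    rcases le_or_gt 0 t with htpos | htneg
    · -- t ≥ 0
      have ha0 : 0 ≤ a := by positivity
      have haP : a ≤ (P-1)/4 := by
        have h1 : t ≤ ((P-1)/(4*(d:ℝ))) := le_trans ht1 (min_le_right _ _)
        rw [ha_def]
        calc (d:ℝ) * t ≤ (d:ℝ) * (((P-1)/(4*(d:ℝ)))) := by
              apply mul_le_mul_of_nonneg_left h1 hd0.le
        _ = (P-1)/4 := by field_simp
      have hq0 : 0 ≤ a/(p-1) := by positivity
      have hq14 : a/(p-1) ≤ 1/4 := by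
        rw [div_le_iff₀ hp0]
        nlinarith only [haP, hp, hP0, hp0]
      have hF1 : (⨍ x in ball z r, (Wb d x)^a) ≤ M^a := avg_le_sup hd z hr ha0
      have hF2 : (⨍ x in ball z r, (Wb d x)^(-(a/(p-1)))) ≤
          12 * Kc d * M^(-(a/(p-1))) := avg_neg_pow hd z hr hq0 hq14
      have hF2' : (⨍ x in ball z r, (Wb d x)^(-(a/(p-1))))^(p-1) ≤
          (12 * Kc d)^(p-1) * M^(-a) := by
        calc (⨍ x in ball z r, (Wb d x)^(-(a/(p-1))))^(p-1)
            ≤ (12 * Kc d * M^(-(a/(p-1))))^(p-1) :=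
              Real.rpow_le_rpow havg2_nonneg hF2 (by linarith)
        _ = (12 * Kc d)^(p-1) * (M^(-(a/(p-1))))^(p-1) :=
              Real.mul_rpow hKC.le (Real.rpow_nonneg hMpos.le _)
        _ = (12 * Kc d)^(p-1) * M^(-a) := by rw [hMexp]
      calc (⨍ x in ball z r, (Wb d x)^a) *
            (⨍ x in ball z r, (Wb d x)^(-(a/(p-1))))^(p-1)
          ≤ M^a * ((12 * Kc d)^(p-1) * M^(-a)) := by
            apply mul_le_mul hF1 hF2' (Real.rpow_nonneg havg2_nonneg _)
              (Real.rpow_nonneg hMpos.le _)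
      _ = (12 * Kc d)^(p-1) * (M^a * M^(-a)) := by ring
      _ = (12 * Kc d)^(p-1) := by
          rw [← Real.rpow_add hMpos]
          simp
      _ ≤ (12 * Kc d)^(p-1) + 12 * Kc d := by linarith
    · -- t < 0
      have ha0 : a < 0 := by
        rw [ha_def]
        exact mul_neg_of_pos_of_neg hd0 htneg
      have hq10 : 0 ≤ -a := by linarith
      have hq14' : -a ≤ 1/4 := by
        have h1 : -t ≤ (1:ℝ)/(4*(d:ℝ)) := le_trans (by linarith [ht2] : -t ≤ min ((1:ℝ)/(4*(d:ℝ))) (((P-1)/(4*(d:ℝ))))) (min_le_left _ _)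
        rw [ha_def]
        calc -((d:ℝ)*t) = (d:ℝ) * (-t) := by ring
        _ ≤ (d:ℝ) * ((1:ℝ)/(4*(d:ℝ))) := by
            apply mul_le_mul_of_nonneg_left h1 hd0.le
        _ = 1/4 := by field_simp
      have hF1 : (⨍ x in ball z r, (Wb d x)^a) ≤ 12 * Kc d * M^a := by
        have := avg_neg_pow hd z hr (q := -a) hq10 hq14'
        rw [neg_neg] at this
        exact this
      have hs0 : 0 ≤ -(a/(p-1)) := by
        rw [neg_div']
        exact div_nonneg (by linarith) hp0.le
      have hF2 : (⨍ x in ball z r, (Wb d x)^(-(a/(p-1)))) ≤ M^(-(a/(p-1))) :=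
        avg_le_sup hd z hr hs0
      have hF2' : (⨍ x in ball z r, (Wb d x)^(-(a/(p-1))))^(p-1) ≤ M^(-a) := by
        calc (⨍ x in ball z r, (Wb d x)^(-(a/(p-1))))^(p-1)
            ≤ (M^(-(a/(p-1))))^(p-1) :=
              Real.rpow_le_rpow havg2_nonneg hF2 (by linarith)
        _ = M^(-a) := hMexp a
      calc (⨍ x in ball z r, (Wb d x)^a) *
            (⨍ x in ball z r, (Wb d x)^(-(a/(p-1))))^(p-1)
          ≤ (12 * Kc d * M^a) * M^(-a) := by
            apply mul_le_mul hF1 hF2' (Real.rpow_nonneg havg2_nonneg _) ?_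
            positivity
      _ = 12 * Kc d * (M^a * M^(-a)) := by ring
      _ = 12 * Kc d := by
          rw [← Real.rpow_add hMpos]
          simp
      _ ≤ (12 * Kc d)^(p-1) + 12 * Kc d := by
          nlinarith only [Real.rpow_nonneg hKC.le (p-1)]
end
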